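/- arXiv:2309.04439 — 7 statements merged into one kernel-verified Lean document; each statement's English description precedes it below -/
import Mathlib

section
/- Let U, H, Z be real normed spaces, let A : U → H and B : U → Z be continuous linear maps, let f ∈ H, g ∈ Z, and suppose u ∈ U satisfies A u = f and B u = g. Assume the stability bound: there exists C_s > 0 such that C_s·‖v‖_U ≤ ‖A v‖_H + ‖B v‖_Z for all v ∈ U. Then for every τ₁ ≥ 1 and every w ∈ U one has ‖w − u‖_U ≤ C_s⁻¹ · √2 · (‖A w − f‖_H² + τ₁·‖B w − g‖_Z²)^{1/2}. -/
/-- a posteriori error estimate for the PINN loss. -/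
theorem pinn_a_posteriori_estimate
    {U H Z : Type*} [NormedAddCommGroup U] [NormedSpace ℝ U]
    [NormedAddCommGroup H] [NormedSpace ℝ H]
    [NormedAddCommGroup Z] [NormedSpace ℝ Z]
    (A : U →L[ℝ] H) (B : U →L[ℝ] Z) (f : H) (g : Z) (u : U)
    (hAu : A u = f) (hBu : B u = g)
    (Cs : ℝ) (hCs : 0 < Cs)
    (hstab : ∀ v : U, Cs * ‖v‖ ≤ ‖A v‖ + ‖B v‖) :
    ∀ τ₁ : ℝ, 1 ≤ τ₁ → ∀ w : U,
      ‖w - u‖ ≤ Cs⁻¹ * Real.sqrt 2 *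
        Real.sqrt (‖A w - f‖ ^ 2 + τ₁ * ‖B w - g‖ ^ 2) := by
  intro τ₁ hτ w
  set a := ‖A w - f‖ with ha
  set b := ‖B w - g‖ with hb
  have ha0 : 0 ≤ a := norm_nonneg _
  have hb0 : 0 ≤ b := norm_nonneg _
  have hkey : Cs * ‖w - u‖ ≤ a + b := by
    have := hstab (w - u)
    simpa [map_sub, hAu, hBu, ha, hb] using this
  have hsq : (a + b) ^ 2 ≤ 2 * (a ^ 2 + τ₁ * b ^ 2) := by
    nlinarith [sq_nonneg (a - b), sq_nonneg b]
  have hab : a + b ≤ Real.sqrt 2 * Real.sqrt (a ^ 2 + τ₁ * b ^ 2) := by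
    rw [← Real.sqrt_mul (by norm_num : (0:ℝ) ≤ 2)]
    have := Real.sqrt_le_sqrt hsq
    rwa [Real.sqrt_sq (by positivity)] at this
  have : Cs * ‖w - u‖ ≤ Real.sqrt 2 * Real.sqrt (a ^ 2 + τ₁ * b ^ 2) :=
    hkey.trans hab
  rw [mul_assoc]
  exact (le_inv_mul_iff₀ hCs).2 this
end

section
/- Let U, H, Z be real normed spaces, A : U → H and B : U → Z continuous linear maps, f ∈ H, g ∈ Z, τ₁ > 0, and define the PINN loss J_{τ₁}(v) := ‖A v − f‖_H² + τ₁·‖B v − g‖_Z² for v ∈ U. Let X be a real normed space and ι : X → U a continuous linear map. Suppose u ∈ U is a solution in the sense that there exists a sequence (u_k) in X with ‖ι u_k − u‖_U → 0 and ‖A(ι u_k) − f‖_H + ‖B(ι u_k) − g‖_Z → 0 as k → ∞. Let (N_n)_{n∈ℕ} be subsets of X with N_n ⊆ N_{n+1} for all n and with ⋃_n N_n dense in X. If (u_n) is a sequence with u_n ∈ N_n and J_{τ₁}(ι u_n) ≤ inf{ J_{τ₁}(ι v) : v ∈ N_n } + γ_n for some sequence γ_n → 0, then J_{τ₁}(ι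 u_n) → 0 as n → ∞. -/
open Filter

/-- convergence of the PINN loss along quasi-minimizing sequences. -/
theorem pinn_loss_convergence_of_quasiMinimizing
    {U H Z X : Type*} [NormedAddCommGroup U] [NormedSpace ℝ U]
    [NormedAddCommGroup H] [NormedSpace ℝ H]
    [NormedAddCommGroup Z] [NormedSpace ℝ Z]
    [NormedAddCommGroup X] [NormedSpace ℝ X]
    (A : U →L[ℝ] H) (B : U →L[ℝ] Z) (f : H) (g : Z)
    (τ₁ : ℝ) (hτ₁ : 0 < τ₁)
    (J : U → ℝ) (hJ : ∀ v : U, J v = ‖A v - f‖ ^ 2 + τ₁ * ‖B v - g‖ ^ 2)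
    (ι : X →L[ℝ] U) (u : U) (uk : ℕ → X)
    (huk1 : Tendsto (fun k => ‖ι (uk k) - u‖) atTop (nhds 0))
    (huk2 : Tendsto (fun k => ‖A (ι (uk k)) - f‖ + ‖B (ι (uk k)) - g‖) atTop (nhds 0))
    (N : ℕ → Set X) (hmono : ∀ n, N n ⊆ N (n + 1)) (hdense : Dense (⋃ n, N n))
    (un : ℕ → X) (hun : ∀ n, un n ∈ N n)
    (γ : ℕ → ℝ) (hγ : Tendsto γ atTop (nhds 0))
    (hquasi : ∀ n, J (ι (un n)) ≤ sInf ((fun v => J (ι v)) '' N n) + γ n) :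
    Tendsto (fun n => J (ι (un n))) atTop (nhds 0) := by
  -- nonnegativity of J
  have hJ0 : ∀ v : U, 0 ≤ J v := by
    intro v
    rw [hJ v]
    positivity
  -- monotonicity of N
  have hN : ∀ m n : ℕ, m ≤ n → N m ⊆ N n := by
    intro m n h
    induction h with
    | refl => exact fun _ h => h
    | step _ ih => exact fun x hx => hmono _ (ih hx)
  -- continuity of v ↦ J (ι v) on X
  have hcont : Continuous fun v : X => J (ι v) := by
    have : (fun v : X => J (ι v))
        = fun v : X => ‖A (ι v) - f‖ ^ 2 + τ₁ * ‖B (ι v) - g‖ ^ 2 := by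
      funext v; exact hJ _
    rw [this]
    fun_prop
  -- J (ι (uk k)) → 0
  have hA : Tendsto (fun k => ‖A (ι (uk k)) - f‖) atTop (nhds 0) :=
    squeeze_zero (fun k => norm_nonneg _) (fun k => le_add_of_nonneg_right (norm_nonneg _)) huk2
  have hB : Tendsto (fun k => ‖B (ι (uk k)) - g‖) atTop (nhds 0) :=
    squeeze_zero (fun k => norm_nonneg _) (fun k => le_add_of_nonneg_left (norm_nonneg _)) huk2
  have hJk : Tendsto (fun k => J (ι (uk k))) atTop (nhds 0) := by
    have : Tendsto (fun k => ‖A (ι (uk k)) - f‖ ^ 2 + τ₁ * ‖B (ι (uk k)) - g‖ ^ 2)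
        atTop (nhds (0 ^ 2 + τ₁ * 0 ^ 2)) := ((hA.pow 2).add ((hB.pow 2).const_mul τ₁))
    simpa [hJ] using this
  -- main argument
  rw [Metric.tendsto_atTop]
  intro ε hε
  -- pick k with J (ι (uk k)) < ε/2
  obtain ⟨k, hk⟩ := (hJk.eventually (gt_mem_nhds (by linarith : (0:ℝ) < ε/2))).exists
  -- open set of small loss meets the dense union
  have hopen : IsOpen {v : X | J (ι v) < ε/2} := isOpen_lt hcont continuous_const
  obtain ⟨v, hvU, hv⟩ := hdense.exists_mem_open hopen ⟨uk k, hk⟩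
  obtain ⟨m, hvm⟩ := Set.mem_iUnion.mp hvU
  -- γ eventually small
  obtain ⟨M, hM⟩ := (Metric.tendsto_atTop.mp hγ) (ε/2) (by linarith)
  refine ⟨max m M, fun n hn => ?_⟩
  have hnm : m ≤ n := le_trans (le_max_left _ _) hn
  have hnM : M ≤ n := le_trans (le_max_right _ _) hn
  have hvn : v ∈ N n := hN m n hnm hvm
  have hbdd : BddBelow ((fun v => J (ι v)) '' N n) :=
    ⟨0, fun x ⟨w, _, hw⟩ => hw ▸ hJ0 _⟩
  have hinf : sInf ((fun v => J (ι v)) '' N n) ≤ J (ι v) :=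
    csInf_le hbdd ⟨v, hvn, rfl⟩
  have hγn : |γ n| < ε/2 := by
    have := hM n hnM
    rwa [Real.dist_eq, sub_zero] at this
  have : J (ι (un n)) < ε := by
    have h1 := hquasi n
    have h2 : γ n ≤ |γ n| := le_abs_self _
    have hv2 : J (ι v) < ε/2 := hv
    linarith
  rw [Real.dist_eq, sub_zero, abs_of_nonneg (hJ0 _)]
  exact this
end

section
/- Let U, H, Z be real normed spaces, A : U → H and B : U → Z continuous linear maps, f ∈ H, g ∈ Z, τ₁ > 0, and J_{τ₁}(v) := ‖A v − f‖_H² + τ₁·‖B v − g‖_Z². Let X be a real normed space, ι : X → U a continuous linear map, and suppose u ∈ U admits an approximating sequence (u_k) in X with ‖ι u_k − u‖_U → 0 and ‖A(ι u_k) − f‖_H + ‖B(ι u_k) − g‖_Z → 0. Let R : U → ℝ be nonnegative and satisfy: R(ι v_k) → R(u) for every sequence (v_k) in X with ‖ι v_k − u‖_U → 0 and ‖A(ι v_k) − f‖_H + ‖B(ι v_k) − g‖_Z → 0. Let τ₂ ≥ 0 and set Ĵ(v) := J_{τ₁}(ι v) + τ₂·R(ι v) for v ∈ X. Let (N_n)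 be subsets of X with N_n ⊆ N_{n+1} and ⋃_n N_n dense in X, and let (u_n), u_n ∈ N_n, satisfy Ĵ(u_n) ≤ inf{ Ĵ(v) : v ∈ N_n } + γ_n with γ_n → 0. Then limsup_{n→∞} Ĵ(u_n) ≤ τ₂·R(u). -/
open Filter

/-- limsup bound for the regularized PINN loss along quasi-minimizing
sequences (the paper's loss-convergence theorem for the PDE-constrained problem). -/
theorem regularized_pinn_loss_limsup_bound
    {U H Z X : Type*} [NormedAddCommGroup U] [NormedSpace ℝ U]
    [NormedAddCommGroup H] [NormedSpace ℝ H]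
    [NormedAddCommGroup Z] [NormedSpace ℝ Z]
    [NormedAddCommGroup X] [NormedSpace ℝ X]
    (A : U →L[ℝ] H) (B : U →L[ℝ] Z) (f : H) (g : Z)
    (τ₁ : ℝ) (hτ₁ : 0 < τ₁)
    (J : U → ℝ) (hJ : ∀ v : U, J v = ‖A v - f‖ ^ 2 + τ₁ * ‖B v - g‖ ^ 2)
    (ι : X →L[ℝ] U) (u : U) (uk : ℕ → X)
    (huk1 : Tendsto (fun k => ‖ι (uk k) - u‖) atTop (nhds 0))
    (huk2 : Tendsto (fun k => ‖A (ι (uk k)) - f‖ + ‖B (ι (uk k)) - g‖) atTop (nhds 0))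
    (R : U → ℝ) (hRnonneg : ∀ v : U, 0 ≤ R v)
    (hRcont : ∀ vk : ℕ → X,
      Tendsto (fun k => ‖ι (vk k) - u‖) atTop (nhds 0) →
      Tendsto (fun k => ‖A (ι (vk k)) - f‖ + ‖B (ι (vk k)) - g‖) atTop (nhds 0) →
      Tendsto (fun k => R (ι (vk k))) atTop (nhds (R u)))
    (τ₂ : ℝ) (hτ₂ : 0 ≤ τ₂)
    (Jhat : X → ℝ) (hJhat : ∀ v : X, Jhat v = J (ι v) + τ₂ * R (ι v))
    (N : ℕ → Set X) (hmono : ∀ n, N n ⊆ N (n + 1)) (hdense : Dense (⋃ n, N n))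
    (un : ℕ → X) (hun : ∀ n, un n ∈ N n)
    (γ : ℕ → ℝ) (hγ : Tendsto γ atTop (nhds 0))
    (hquasi : ∀ n, Jhat (un n) ≤ sInf (Jhat '' N n) + γ n) :
    limsup (fun n => Jhat (un n)) atTop ≤ τ₂ * R u := by
  -- Jhat is nonnegative
  have hJnonneg : ∀ v : U, 0 ≤ J v := by
    intro v; rw [hJ]; positivity
  have hJhatnonneg : ∀ v : X, 0 ≤ Jhat v := by
    intro v; rw [hJhat]
    have := hJnonneg (ι v)
    have := mul_nonneg hτ₂ (hRnonneg (ι v))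
    linarith
  -- ι (uk k) → u
  have hιuk : Tendsto (fun k => ι (uk k)) atTop (nhds u) :=
    tendsto_iff_norm_sub_tendsto_zero.mpr huk1
  -- Extract residual convergence for uk
  have hAres : Tendsto (fun k => ‖A (ι (uk k)) - f‖) atTop (nhds 0) := by
    refine squeeze_zero (fun k => norm_nonneg _) (fun k => ?_) huk2
    have := norm_nonneg (B (ι (uk k)) - g); linarith
  have hBres : Tendsto (fun k => ‖B (ι (uk k)) - g‖) atTop (nhds 0) := by
    refine squeeze_zero (fun k => norm_nonneg _) (fun k => ?_) huk2
    have := norm_nonneg (A (ι (uk k)) - f); linarith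
  -- A u = f and B u = g
  have hAu : A u = f := by
    have h1 : Tendsto (fun k => A (ι (uk k))) atTop (nhds (A u)) :=
      (A.continuous.tendsto u).comp hιuk
    have h2 : Tendsto (fun k => A (ι (uk k))) atTop (nhds f) :=
      tendsto_iff_norm_sub_tendsto_zero.mpr hAres
    exact tendsto_nhds_unique h1 h2
  have hBu : B u = g := by
    have h1 : Tendsto (fun k => B (ι (uk k))) atTop (nhds (B u)) :=
      (B.continuous.tendsto u).comp hιuk
    have h2 : Tendsto (fun k => B (ι (uk k))) atTop (nhds g) :=
      tendsto_iff_norm_sub_tendsto_zero.mpr hBres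
    exact tendsto_nhds_unique h1 h2
  -- choose vk in ⋃ N n close to uk
  have hexists : ∀ k : ℕ, ∃ y ∈ ⋃ n, N n, dist (uk k) y < 1 / (k + 1) := by
    intro k
    exact hdense.exists_dist_lt (uk k) (by positivity)
  choose vk hvkmem hvkdist using hexists
  -- vk - uk → 0 in norm, hence ι vk → u
  have hvuk : Tendsto (fun k => ‖vk k - uk k‖) atTop (nhds 0) := by
    refine squeeze_zero (f := fun k => ‖vk k - uk k‖) (g := fun k => 1 / (k + 1)) (fun k => norm_nonneg _) (fun k => ?_) ?_
    · show ‖vk k - uk k‖ ≤ 1 / (k + 1)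
      rw [← dist_eq_norm, dist_comm]
      exact (hvkdist k).le
    · exact tendsto_one_div_add_atTop_nhds_zero_nat
  have hιvk : Tendsto (fun k => ι (vk k)) atTop (nhds u) := by
    have h1 : Tendsto (fun k => ι (vk k) - ι (uk k)) atTop (nhds 0) := by
      rw [tendsto_zero_iff_norm_tendsto_zero]
      refine squeeze_zero (f := fun k => ‖ι (vk k) - ι (uk k)‖)
        (g := fun k => ‖ι‖ * ‖vk k - uk k‖) (fun k => norm_nonneg _) (fun k => ?_) ?_
      · show ‖ι (vk k) - ι (uk k)‖ ≤ ‖ι‖ * ‖vk k - uk k‖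
        rw [← map_sub]
        exact ι.le_opNorm _
      · simpa using hvuk.const_mul ‖ι‖
    have : Tendsto (fun k => (ι (vk k) - ι (uk k)) + ι (uk k)) atTop (nhds (0 + u)) :=
      h1.add hιuk
    simpa using this
  have hιvknorm : Tendsto (fun k => ‖ι (vk k) - u‖) atTop (nhds 0) :=
    tendsto_iff_norm_sub_tendsto_zero.mp hιvk
  have hAvk : Tendsto (fun k => ‖A (ι (vk k)) - f‖) atTop (nhds 0) := by
    have h1 : Tendsto (fun k => A (ι (vk k))) atTop (nhds f) := by
      rw [← hAu]
      exact (A.continuous.tendsto u).comp hιvk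
    exact tendsto_iff_norm_sub_tendsto_zero.mp h1
  have hBvk : Tendsto (fun k => ‖B (ι (vk k)) - g‖) atTop (nhds 0) := by
    have h1 : Tendsto (fun k => B (ι (vk k))) atTop (nhds g) := by
      rw [← hBu]
      exact (B.continuous.tendsto u).comp hιvk
    exact tendsto_iff_norm_sub_tendsto_zero.mp h1
  have hABvk : Tendsto (fun k => ‖A (ι (vk k)) - f‖ + ‖B (ι (vk k)) - g‖) atTop (nhds 0) := by
    simpa using hAvk.add hBvk
  -- R (ι vk) → R u
  have hRvk : Tendsto (fun k => R (ι (vk k))) atTop (nhds (R u)) :=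
    hRcont vk hιvknorm hABvk
  -- J (ι vk) → 0
  have hJvk : Tendsto (fun k => J (ι (vk k))) atTop (nhds 0) := by
    have h1 : Tendsto (fun k => ‖A (ι (vk k)) - f‖ ^ 2 + τ₁ * ‖B (ι (vk k)) - g‖ ^ 2)
        atTop (nhds (0 ^ 2 + τ₁ * 0 ^ 2)) :=
      ((hAvk.pow 2).add ((hBvk.pow 2).const_mul τ₁))
    simp only [hJ]
    simpa using h1
  -- Jhat vk → τ₂ * R u
  have hJhatvk : Tendsto (fun k => Jhat (vk k)) atTop (nhds (τ₂ * R u)) := by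
    have h1 : Tendsto (fun k => J (ι (vk k)) + τ₂ * R (ι (vk k))) atTop
        (nhds (0 + τ₂ * R u)) := hJvk.add (hRvk.const_mul τ₂)
    simp only [hJhat]
    simpa using h1
  -- monotone chain
  have hchain : ∀ m n : ℕ, m ≤ n → N m ⊆ N n := by
    intro m n hmn
    induction n, hmn using Nat.le_induction with
    | base => exact subset_rfl
    | succ n hmn ih => exact ih.trans (hmono n)
  -- key: limsup ≤ Jhat (vk k) for every k
  have key : ∀ k : ℕ, limsup (fun n => Jhat (un n)) atTop ≤ Jhat (vk k) := by
    intro k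
    obtain ⟨m, hm⟩ := Set.mem_iUnion.mp (hvkmem k)
    have hle : ∀ᶠ n in atTop, Jhat (un n) ≤ Jhat (vk k) + γ n := by
      filter_upwards [eventually_ge_atTop m] with n hn
      have hmem : vk k ∈ N n := hchain m n hn hm
      have hinf : sInf (Jhat '' N n) ≤ Jhat (vk k) := by
        apply csInf_le
        · exact ⟨0, fun x ⟨w, _, hw⟩ => hw ▸ hJhatnonneg w⟩
        · exact ⟨vk k, hmem, rfl⟩
      linarith [hquasi n]
    have hrhs : Tendsto (fun n => Jhat (vk k) + γ n) atTop (nhds (Jhat (vk k))) := by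
      simpa using (tendsto_const_nhds (x := Jhat (vk k)) (f := atTop (α := ℕ))).add hγ
    calc limsup (fun n => Jhat (un n)) atTop
        ≤ limsup (fun n => Jhat (vk k) + γ n) atTop := by
          exact limsup_le_limsup hle
            (isCoboundedUnder_le_of_le atTop (x := 0) (fun n => hJhatnonneg (un n)))
            hrhs.isBoundedUnder_le
      _ = Jhat (vk k) := hrhs.limsup_eq
  exact ge_of_tendsto hJhatvk (Eventually.of_forall key)
end

section
/- Let Ω ⊆ ℝ^d be a bounded open set and δ > 0. Let (u_j)_{j∈ℕ} be a sequence in L²(Ω) with sup_j ‖u_j‖_{L²(Ω)} < ∞, and let y ∈ L²(Ω) be such that ∫_Ω u_j(x) v(x) dx → ∫_Ω y(x) v(x) dx as j → ∞ for every v ∈ L²(Ω) (weak convergence in L²(Ω)). Then ‖Q_δ u_j − Q_δ y‖_{L²(Ω_δ)} → 0 as j → ∞. -/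
open MeasureTheory Filter
open scoped ENNReal NNReal

/-- The averaging operator `Q_δ`. -/
noncomputable def Qavg {d : ℕ} (δ : ℝ) (v : EuclideanSpace ℝ (Fin d) → ℝ)
    (x : EuclideanSpace ℝ (Fin d)) : ℝ :=
  (volume (Metric.closedBall x (δ / 2))).toReal⁻¹ * ∫ z in Metric.closedBall x (δ / 2), v z

/-- The inner region `Ω_δ = {x ∈ Ω : dist(x, Ωᶜ) > δ/2}`. -/
def OmegaDelta {d : ℕ} (Ω : Set (EuclideanSpace ℝ (Fin d))) (δ : ℝ) :
    Set (EuclideanSpace ℝ (Fin d)) :=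
  {x ∈ Ω | δ / 2 < Metric.infDist x Ωᶜ}

lemma stronglyMeasurable_setIntegral_closedBall {d : ℕ} (r : ℝ)
    (f : EuclideanSpace ℝ (Fin d) → ℝ) (hf : StronglyMeasurable f) :
    StronglyMeasurable (fun x => ∫ z in Metric.closedBall x r, f z) := by
  have hS : MeasurableSet {p : (EuclideanSpace ℝ (Fin d)) × (EuclideanSpace ℝ (Fin d)) |
      dist p.2 p.1 ≤ r} := by
    have : IsClosed {p : (EuclideanSpace ℝ (Fin d)) × (EuclideanSpace ℝ (Fin d)) |
        dist p.2 p.1 ≤ r} := isClosed_le (continuous_snd.dist continuous_fst) continuous_const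
    exact this.measurableSet
  have key : (fun x => ∫ z in Metric.closedBall x r, f z) =
      fun x => ∫ z, ({p : (EuclideanSpace ℝ (Fin d)) × (EuclideanSpace ℝ (Fin d)) |
        dist p.2 p.1 ≤ r}.indicator (fun p => f p.2)) (x, z) := by
    funext x
    rw [← integral_indicator (measurableSet_closedBall)]
    congr 1
  rw [key]
  exact ((hf.comp_measurable measurable_snd).indicator hS).integral_prod_right'

/-- strong `L²(Ω_δ)` convergence of averages along a bounded weakly
convergent sequence in `L²(Ω)`. -/
theorem averaging_of_weakly_convergent_sequence
    {d : ℕ} (Ω : Set (EuclideanSpace ℝ (Fin d)))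
    (hΩopen : IsOpen Ω) (hΩbdd : Bornology.IsBounded Ω)
    (δ : ℝ) (hδ : 0 < δ)
    (u : ℕ → EuclideanSpace ℝ (Fin d) → ℝ)
    (hu : ∀ j, MemLp (u j) 2 (volume.restrict Ω))
    (C : ℝ) (hbdd : ∀ j, (eLpNorm (u j) 2 (volume.restrict Ω)).toReal ≤ C)
    (y : EuclideanSpace ℝ (Fin d) → ℝ) (hy : MemLp y 2 (volume.restrict Ω))
    (hweak : ∀ v : EuclideanSpace ℝ (Fin d) → ℝ, MemLp v 2 (volume.restrict Ω) →
      Tendsto (fun j => ∫ x in Ω, u j x * v x) atTop (nhds (∫ x in Ω, y x * v x))) :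
    Tendsto
      (fun j => (eLpNorm (fun x => Qavg δ (u j) x - Qavg δ y x) 2
        (volume.restrict (OmegaDelta Ω δ))).toReal)
      atTop (nhds 0) := by
  classical
  -- finite measure instances
  haveI hfinΩ : IsFiniteMeasure (volume.restrict Ω) :=
    ⟨by rw [Measure.restrict_apply_univ]; exact hΩbdd.measure_lt_top⟩
  have hΩδsub : OmegaDelta Ω δ ⊆ Ω := fun x hx => hx.1
  haveI hfinΩδ : IsFiniteMeasure (volume.restrict (OmegaDelta Ω δ)) :=
    ⟨by rw [Measure.restrict_apply_univ]
        exact lt_of_le_of_lt (measure_mono hΩδsub) hΩbdd.measure_lt_top⟩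
  have hΩδmeas : MeasurableSet (OmegaDelta Ω δ) := by
    have : IsOpen (Ω ∩ {x | δ / 2 < Metric.infDist x Ωᶜ}) :=
      hΩopen.inter (isOpen_lt continuous_const (Metric.continuous_infDist_pt Ωᶜ))
    exact this.measurableSet
  -- balls around points of Ω_δ stay in Ω
  have hball : ∀ x ∈ OmegaDelta Ω δ, Metric.closedBall x (δ / 2) ⊆ Ω := by
    intro x hx z hz
    by_contra hzΩ
    have h1 : Metric.infDist x Ωᶜ ≤ dist x z := Metric.infDist_le_dist_of_mem hzΩ
    rw [Metric.mem_closedBall] at hz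
    rw [dist_comm] at h1
    have := hx.2
    linarith
  -- ball volume is a positive finite constant
  set cB : ℝ≥0∞ := volume (Metric.closedBall (0 : EuclideanSpace ℝ (Fin d)) (δ / 2)) with hcB
  have hcB_eq : ∀ x : EuclideanSpace ℝ (Fin d), volume (Metric.closedBall x (δ / 2)) = cB :=
    fun x => Measure.addHaar_closedBall_center volume x (δ / 2)
  have hcB_pos : 0 < cB := Metric.measure_closedBall_pos volume _ (by positivity)
  have hcB_lt : cB < ⊤ := measure_closedBall_lt_top
  -- measurable representatives
  set f : ℕ → EuclideanSpace ℝ (Fin d) → ℝ := fun j => (hu j).1.mk (u j) with hf_def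
  set g : EuclideanSpace ℝ (Fin d) → ℝ := hy.1.mk y with hg_def
  have hfsm : ∀ j, StronglyMeasurable (f j) := fun j => (hu j).1.stronglyMeasurable_mk
  have hgsm : StronglyMeasurable g := hy.1.stronglyMeasurable_mk
  have hfmem : ∀ j, MemLp (f j) 2 (volume.restrict Ω) := fun j => (hu j).ae_eq (hu j).1.ae_eq_mk
  have hgmem : MemLp g 2 (volume.restrict Ω) := hy.ae_eq hy.1.ae_eq_mk
  -- the averaging operator with constant normalization
  set G : (EuclideanSpace ℝ (Fin d) → ℝ) → EuclideanSpace ℝ (Fin d) → ℝ :=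
    fun w x => cB.toReal⁻¹ * ∫ z in Metric.closedBall x (δ / 2), w z with hG_def
  have hGsm : ∀ w, StronglyMeasurable w → StronglyMeasurable (G w) := fun w hw =>
    (stronglyMeasurable_setIntegral_closedBall (δ / 2) w hw).const_mul _
  -- integrals over balls don't see ae-modification
  have hIeq : ∀ (w w' : EuclideanSpace ℝ (Fin d) → ℝ),
      w =ᵐ[volume.restrict Ω] w' → ∀ x ∈ OmegaDelta Ω δ,
      ∫ z in Metric.closedBall x (δ / 2), w z = ∫ z in Metric.closedBall x (δ / 2), w' z := by
    intro w w' hww' x hx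
    exact integral_congr_ae (ae_restrict_of_ae_restrict_of_subset (hball x hx) hww')
  have hQf : ∀ j, ∀ x ∈ OmegaDelta Ω δ, Qavg δ (u j) x = G (f j) x := by
    intro j x hx
    unfold Qavg
    rw [hcB_eq x, hIeq (u j) (f j) (hu j).1.ae_eq_mk x hx]
  have hQy : ∀ x ∈ OmegaDelta Ω δ, Qavg δ y x = G g x := by
    intro x hx
    unfold Qavg
    rw [hcB_eq x, hIeq y g hy.1.ae_eq_mk x hx]
  -- Cauchy-Schwarz type bound on ball integrals
  set A : ℝ := cB.toReal ^ ((2:ℝ)⁻¹) with hA_def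
  have hAnn : 0 ≤ A := Real.rpow_nonneg ENNReal.toReal_nonneg _
  have hbound : ∀ (w : EuclideanSpace ℝ (Fin d) → ℝ), MemLp w 2 (volume.restrict Ω) →
      ∀ x ∈ OmegaDelta Ω δ,
      |∫ z in Metric.closedBall x (δ / 2), w z| ≤
        A * (eLpNorm w 2 (volume.restrict Ω)).toReal := by
    intro w hw x hx
    set B := Metric.closedBall x (δ / 2) with hB
    have hBm : MeasurableSet B := measurableSet_closedBall
    have hBΩ := hball x hx
    haveI : IsFiniteMeasure (volume.restrict B) :=
      ⟨by rw [Measure.restrict_apply_univ]; exact measure_closedBall_lt_top⟩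
    have hw2B : MemLp w 2 (volume.restrict B) :=
      hw.mono_measure (Measure.restrict_mono hBΩ le_rfl)
    have hint : Integrable w (volume.restrict B) :=
      memLp_one_iff_integrable.mp (hw2B.mono_exponent (by norm_num))
    have h1 : |∫ z in B, w z| ≤ ∫ z in B, ‖w z‖ := by
      rw [← Real.norm_eq_abs]; exact norm_integral_le_integral_norm w
    have h2 : ∫ z in B, ‖w z‖ = (eLpNorm w 1 (volume.restrict B)).toReal := by
      rw [eLpNorm_one_eq_lintegral_enorm, integral_norm_eq_lintegral_enorm hw2B.1]
    have h3 : eLpNorm w 1 (volume.restrict B) ≤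
        eLpNorm w 2 (volume.restrict B) *
          (volume.restrict B Set.univ) ^ (1 / (1:ℝ≥0∞).toReal - 1 / (2:ℝ≥0∞).toReal) :=
      eLpNorm_le_eLpNorm_mul_rpow_measure_univ (by norm_num) hw2B.1
    have hexp : (1 / (1:ℝ≥0∞).toReal - 1 / (2:ℝ≥0∞).toReal) = (2:ℝ)⁻¹ := by
      norm_num
    have hμuniv : volume.restrict B Set.univ = cB := by
      rw [Measure.restrict_apply_univ]; exact hcB_eq x
    have h4 : eLpNorm w 2 (volume.restrict B) ≤ eLpNorm w 2 (volume.restrict Ω) :=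
      eLpNorm_mono_measure w (Measure.restrict_mono hBΩ le_rfl)
    have hfin : eLpNorm w 2 (volume.restrict Ω) ≠ ⊤ := hw.2.ne
    calc |∫ z in B, w z| ≤ (eLpNorm w 1 (volume.restrict B)).toReal := by rw [← h2]; exact h1
      _ ≤ ((eLpNorm w 2 (volume.restrict Ω)) * cB ^ ((2:ℝ)⁻¹)).toReal := by
          apply ENNReal.toReal_mono
          · exact ENNReal.mul_ne_top hfin
              (ENNReal.rpow_ne_top_of_nonneg (by norm_num) hcB_lt.ne)
          · calc eLpNorm w 1 (volume.restrict B) ≤ _ := h3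
              _ = eLpNorm w 2 (volume.restrict B) * cB ^ ((2:ℝ)⁻¹) := by
                  rw [hexp, hμuniv]
              _ ≤ _ := mul_le_mul_left h4 _
      _ = A * (eLpNorm w 2 (volume.restrict Ω)).toReal := by
          rw [ENNReal.toReal_mul, ← ENNReal.toReal_rpow, mul_comm, hA_def]
  -- norms of the measurable representatives
  have hfC : ∀ j, (eLpNorm (f j) 2 (volume.restrict Ω)).toReal ≤ C := by
    intro j; rw [eLpNorm_congr_ae (hu j).1.ae_eq_mk.symm]; exact hbdd j
  set Cy : ℝ := (eLpNorm y 2 (volume.restrict Ω)).toReal with hCy_def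
  have hgC : (eLpNorm g 2 (volume.restrict Ω)).toReal = Cy := by
    rw [eLpNorm_congr_ae hy.1.ae_eq_mk.symm]
  -- uniform bound on the difference
  set M : ℝ := cB.toReal⁻¹ * (A * C) + cB.toReal⁻¹ * (A * Cy) with hM_def
  have hcinv_nn : (0:ℝ) ≤ cB.toReal⁻¹ := by positivity
  have hCnn : 0 ≤ C := le_trans ENNReal.toReal_nonneg (hbdd 0)
  have hGbd : ∀ (w : EuclideanSpace ℝ (Fin d) → ℝ), MemLp w 2 (volume.restrict Ω) →
      ∀ x ∈ OmegaDelta Ω δ,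
      |G w x| ≤ cB.toReal⁻¹ * (A * (eLpNorm w 2 (volume.restrict Ω)).toReal) := by
    intro w hw x hx
    rw [hG_def]
    simp only []
    rw [abs_mul, abs_of_nonneg hcinv_nn]
    exact mul_le_mul_of_nonneg_left (hbound w hw x hx) hcinv_nn
  have hdbd : ∀ j, ∀ x ∈ OmegaDelta Ω δ, |G (f j) x - G g x| ≤ M := by
    intro j x hx
    have e1 : |G (f j) x| ≤ cB.toReal⁻¹ * (A * C) := by
      refine le_trans (hGbd (f j) (hfmem j) x hx) ?_
      exact mul_le_mul_of_nonneg_left (mul_le_mul_of_nonneg_left (hfC j) hAnn) hcinv_nn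
    have e2 : |G g x| ≤ cB.toReal⁻¹ * (A * Cy) := by
      refine le_trans (hGbd g hgmem x hx) ?_
      rw [hgC]
    calc |G (f j) x - G g x| ≤ |G (f j) x| + |G g x| := abs_sub _ _
      _ ≤ M := by rw [hM_def]; exact add_le_add e1 e2
  -- pointwise convergence on Ω_δ
  have hpt : ∀ x ∈ OmegaDelta Ω δ,
      Tendsto (fun j => G (f j) x - G g x) atTop (nhds 0) := by
    intro x hx
    have hBm : MeasurableSet (Metric.closedBall x (δ / 2)) := measurableSet_closedBall
    have hBΩ := hball x hx
    set v : EuclideanSpace ℝ (Fin d) → ℝ :=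
      (Metric.closedBall x (δ / 2)).indicator (fun _ => (1:ℝ)) with hv_def
    have hv : MemLp v 2 (volume.restrict Ω) := MemLp.indicator hBm (memLp_const 1)
    have hrw : ∀ w : EuclideanSpace ℝ (Fin d) → ℝ,
        ∫ x' in Ω, w x' * v x' = ∫ z in Metric.closedBall x (δ / 2), w z := by
      intro w
      have hwv : (fun x' => w x' * v x') = (Metric.closedBall x (δ / 2)).indicator w := by
        funext x'
        by_cases hx' : x' ∈ Metric.closedBall x (δ / 2)
        · simp [hv_def, Set.indicator_of_mem hx']
        · simp [hv_def, Set.indicator_of_notMem hx']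
      rw [hwv, setIntegral_indicator hBm, Set.inter_eq_self_of_subset_right hBΩ]
    have hw := hweak v hv
    rw [hrw y, hIeq y g hy.1.ae_eq_mk x hx] at hw
    have hW : Tendsto (fun j => ∫ z in Metric.closedBall x (δ / 2), f j z) atTop
        (nhds (∫ z in Metric.closedBall x (δ / 2), g z)) := by
      refine hw.congr fun j => ?_
      rw [hrw (u j), hIeq (u j) (f j) (hu j).1.ae_eq_mk x hx]
    have := (hW.const_mul (cB.toReal⁻¹)).sub
      (tendsto_const_nhds (x := cB.toReal⁻¹ * ∫ z in Metric.closedBall x (δ / 2), g z))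
    simpa [hG_def, sub_self] using this
  -- strongly measurable differences, MemLp
  have hdsm : ∀ j, StronglyMeasurable (fun x => G (f j) x - G g x) :=
    fun j => ((hGsm _ (hfsm j)).sub (hGsm _ hgsm))
  -- dominated convergence for the squared norms
  have hI : Tendsto (fun j => ∫ x in OmegaDelta Ω δ, ‖G (f j) x - G g x‖ ^ (2:ℝ))
      atTop (nhds 0) := by
    have := tendsto_integral_of_dominated_convergence
      (μ := volume.restrict (OmegaDelta Ω δ))
      (F := fun j x => ‖G (f j) x - G g x‖ ^ (2:ℝ)) (f := fun _ => (0:ℝ))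
      (bound := fun _ => M ^ (2:ℝ))
      (fun j => (((Real.continuous_rpow_const (by norm_num)).measurable.comp
        (hdsm j).measurable.norm).aestronglyMeasurable))
      (integrable_const _)
      (fun j => (ae_restrict_mem hΩδmeas).mono fun x hx => by
        have hnn : (0:ℝ) ≤ ‖G (f j) x - G g x‖ ^ (2:ℝ) :=
          Real.rpow_nonneg (norm_nonneg _) _
        rw [Real.norm_eq_abs, abs_of_nonneg hnn]
        exact Real.rpow_le_rpow (norm_nonneg _)
          (by rw [Real.norm_eq_abs]; exact hdbd j x hx) (by norm_num))
      ((ae_restrict_mem hΩδmeas).mono fun x hx => by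
        have h := ((hpt x hx).norm.rpow_const (p := (2:ℝ)) (Or.inr (by norm_num)))
        rw [norm_zero, Real.zero_rpow (by norm_num : (2:ℝ) ≠ 0)] at h
        exact h)
    simpa using this
  -- conclusion
  have h2 : ((2:ℝ≥0∞)).toReal = (2:ℝ) := by simp
  have hfinal : ∀ j, (eLpNorm (fun x => Qavg δ (u j) x - Qavg δ y x) 2
      (volume.restrict (OmegaDelta Ω δ))).toReal
      = (∫ x in OmegaDelta Ω δ, ‖G (f j) x - G g x‖ ^ (2:ℝ)) ^ ((2:ℝ)⁻¹) := by
    intro j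
    have hcong : (fun x => Qavg δ (u j) x - Qavg δ y x) =ᵐ[volume.restrict (OmegaDelta Ω δ)]
        (fun x => G (f j) x - G g x) :=
      (ae_restrict_mem hΩδmeas).mono fun x hx =>
        show Qavg δ (u j) x - Qavg δ y x = G (f j) x - G g x by rw [hQf j x hx, hQy x hx]
    have hdmem : MemLp (fun x => G (f j) x - G g x) 2 (volume.restrict (OmegaDelta Ω δ)) :=
      MemLp.of_bound (hdsm j).aestronglyMeasurable M
        ((ae_restrict_mem hΩδmeas).mono fun x hx => by
          rw [Real.norm_eq_abs]; exact hdbd j x hx)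
    rw [eLpNorm_congr_ae hcong,
      hdmem.eLpNorm_eq_integral_rpow_norm two_ne_zero ENNReal.ofNat_ne_top, h2,
      ENNReal.toReal_ofReal (Real.rpow_nonneg (integral_nonneg fun x =>
        Real.rpow_nonneg (norm_nonneg _) _) _)]
  have hcont : Tendsto (fun t : ℝ => t ^ ((2:ℝ)⁻¹)) (nhds 0) (nhds 0) := by
    have h := (Real.continuousAt_rpow_const 0 ((2:ℝ)⁻¹) (Or.inr (by norm_num))).tendsto
    rwa [Real.zero_rpow (by norm_num : ((2:ℝ)⁻¹) ≠ 0)] at h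
  exact ((hcont.comp hI).congr fun j => (hfinal j).symm)
end

section
/- Let d < p < ∞, let Ω ⊆ ℝ^d be an open set, let y : Ω → ℝ be continuously differentiable, let δ > 0 and let x ∈ Ω be such that the closed ball V_δ(x) of radius δ/2 centered at x is contained in Ω, and suppose ∇y restricted to V_δ(x) lies in L^p. Then |y(x) − (Q_δ y)(x)| ≤ (1 − d/p)⁻¹ · δ · |V_δ(x)|^{−1/p} · ‖∇y‖_{L^p(V_δ(x))}, where (Q_δ y)(x) = |V_δ(x)|⁻¹ ∫_{V_δ(x)} y(z) dz. -/
open MeasureTheory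
open Pointwise

section aux
variable {d : ℕ}

lemma ball_translate (f : EuclideanSpace ℝ (Fin d) → ℝ)
    (x : EuclideanSpace ℝ (Fin d)) (R : ℝ) :
    ∫ z in Metric.closedBall x R, f (z - x) = ∫ u in Metric.closedBall 0 R, f u := by
  rw [← integral_indicator (measurableSet_closedBall),
    ← integral_indicator (measurableSet_closedBall)]
  have h : ∀ z, (Metric.closedBall x R).indicator (fun z => f (z - x)) z
      = (Metric.closedBall (0 : EuclideanSpace ℝ (Fin d)) R).indicator f (z - x) := by
    intro z
    by_cases hz : z ∈ Metric.closedBall x R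
    · rw [Set.indicator_of_mem hz, Set.indicator_of_mem
        (by simpa [Metric.mem_closedBall, dist_eq_norm] using hz)]
    · rw [Set.indicator_of_notMem hz, Set.indicator_of_notMem
        (by simpa [Metric.mem_closedBall, dist_eq_norm] using hz)]
  simp_rw [h]
  exact integral_sub_right_eq_self
    ((Metric.closedBall (0 : EuclideanSpace ℝ (Fin d)) R).indicator f) x
lemma norm_gradient_eq (y : EuclideanSpace ℝ (Fin d) → ℝ) (w : EuclideanSpace ℝ (Fin d)) :
    ‖gradient y w‖ = ‖fderiv ℝ y w‖ := by
  unfold gradient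
  exact LinearIsometryEquiv.norm_map _ _
lemma ftc_bound {Ω : Set (EuclideanSpace ℝ (Fin d))} (hΩopen : IsOpen Ω)
    {y : EuclideanSpace ℝ (Fin d) → ℝ} (hy : ContDiffOn ℝ 1 y Ω)
    {x z : EuclideanSpace ℝ (Fin d)} {R : ℝ}
    (hball : Metric.closedBall x R ⊆ Ω)
    (hz : z ∈ Metric.closedBall x R) (hR : 0 ≤ R) :
    |y x - y z| ≤ (∫ t in (0:ℝ)..1, ‖gradient y (x + t • (z - x))‖) * ‖z - x‖ := by
  have hx : x ∈ Metric.closedBall x R := Metric.mem_closedBall_self hR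
  set φ : ℝ → EuclideanSpace ℝ (Fin d) := fun t => x + t • (z - x) with hφ
  have hseg : ∀ t ∈ Set.Icc (0:ℝ) 1, φ t ∈ Metric.closedBall x R := fun t ht =>
    (convex_closedBall x R).add_smul_sub_mem hx hz ht
  have hsegΩ : ∀ t ∈ Set.Icc (0:ℝ) 1, φ t ∈ Ω := fun t ht => hball (hseg t ht)
  have hφcont : Continuous φ := by continuity
  have hfd : ContinuousOn (fderiv ℝ y) Ω := hy.continuousOn_fderiv_of_isOpen hΩopen le_rfl
  have hF'cont : ContinuousOn (fun t => (fderiv ℝ y (φ t)) (z - x)) (Set.Icc (0:ℝ) 1) := by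
    refine ContinuousOn.clm_apply ?_ continuousOn_const
    exact hfd.comp hφcont.continuousOn hsegΩ
  have hderiv : ∀ t ∈ Set.uIcc (0:ℝ) 1, HasDerivAt (fun t => y (φ t))
      ((fderiv ℝ y (φ t)) (z - x)) t := by
    intro t ht
    rw [Set.uIcc_of_le (by norm_num : (0:ℝ) ≤ 1)] at ht
    have hmem : φ t ∈ Ω := hsegΩ t ht
    have hdy : HasFDerivAt y (fderiv ℝ y (φ t)) (φ t) :=
      ((hy.differentiableOn one_ne_zero).differentiableAt (hΩopen.mem_nhds hmem)).hasFDerivAt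
    have hφd : HasDerivAt φ (z - x) t := by
      simpa [hφ] using ((hasDerivAt_id t).smul_const (z - x)).const_add x
    exact hdy.comp_hasDerivAt t hφd
  have hint : IntervalIntegrable (fun t => (fderiv ℝ y (φ t)) (z - x)) volume 0 1 := by
    rw [intervalIntegrable_iff_integrableOn_Icc_of_le (by norm_num : (0:ℝ) ≤ 1)]
    exact hF'cont.integrableOn_compact isCompact_Icc
  have heq : ∫ t in (0:ℝ)..1, (fderiv ℝ y (φ t)) (z - x) = y (φ 1) - y (φ 0) :=
    intervalIntegral.integral_eq_sub_of_hasDerivAt hderiv hint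
  have hφ1 : φ 1 = z := by simp [hφ]
  have hφ0 : φ 0 = x := by simp [hφ]
  rw [hφ1, hφ0] at heq
  have habs : |y x - y z| = ‖∫ t in (0:ℝ)..1, (fderiv ℝ y (φ t)) (z - x)‖ := by
    rw [heq, Real.norm_eq_abs, abs_sub_comm]
  rw [habs]
  calc ‖∫ t in (0:ℝ)..1, (fderiv ℝ y (φ t)) (z - x)‖
      ≤ ∫ t in (0:ℝ)..1, ‖(fderiv ℝ y (φ t)) (z - x)‖ :=
        intervalIntegral.norm_integral_le_integral_norm (by norm_num)
    _ ≤ ∫ t in (0:ℝ)..1, ‖gradient y (φ t)‖ * ‖z - x‖ := by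
        apply intervalIntegral.integral_mono_on (by norm_num)
        · rw [intervalIntegrable_iff_integrableOn_Icc_of_le (by norm_num : (0:ℝ) ≤ 1)]
          exact hF'cont.norm.integrableOn_compact isCompact_Icc
        · rw [intervalIntegrable_iff_integrableOn_Icc_of_le (by norm_num : (0:ℝ) ≤ 1)]
          have : ContinuousOn (fun t => ‖gradient y (φ t)‖ * ‖z - x‖) (Set.Icc (0:ℝ) 1) := by
            have h1 : ContinuousOn (fun t => ‖fderiv ℝ y (φ t)‖) (Set.Icc (0:ℝ) 1) :=
              (hfd.comp hφcont.continuousOn hsegΩ).norm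
            have h2 : ContinuousOn (fun t => ‖gradient y (φ t)‖) (Set.Icc (0:ℝ) 1) := by
              simpa only [norm_gradient_eq] using h1
            exact h2.mul continuousOn_const
          exact this.integrableOn_compact isCompact_Icc
        · intro t _
          rw [norm_gradient_eq]
          exact (fderiv ℝ y (φ t)).le_opNorm (z - x)
    _ = (∫ t in (0:ℝ)..1, ‖gradient y (φ t)‖) * ‖z - x‖ := by
        rw [← intervalIntegral.integral_mul_const]
lemma scaling_bound (g : EuclideanSpace ℝ (Fin d) → ℝ) (hg : ∀ w, 0 ≤ g w)
    (x : EuclideanSpace ℝ (Fin d)) {R : ℝ} (hR : 0 ≤ R) {t : ℝ} (ht0 : 0 < t) (ht1 : t ≤ 1)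
    (hint : IntegrableOn g (Metric.closedBall x R)) :
    ∫ z in Metric.closedBall x R, g (x + t • (z - x))
      ≤ (t ^ d)⁻¹ * ∫ w in Metric.closedBall x R, g w := by
  have h1 : ∫ z in Metric.closedBall x R, g (x + t • (z - x))
      = ∫ u in Metric.closedBall 0 R, g (x + t • u) :=
    ball_translate (fun u => g (x + t • u)) x R
  have h2 : ∫ u in Metric.closedBall (0 : EuclideanSpace ℝ (Fin d)) R, g (x + t • u)
      = (t ^ d)⁻¹ • ∫ w in t • Metric.closedBall (0 : EuclideanSpace ℝ (Fin d)) R, g (x + w) := by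
    have := MeasureTheory.Measure.setIntegral_comp_smul_of_pos volume
      (fun w => g (x + w)) (Metric.closedBall (0 : EuclideanSpace ℝ (Fin d)) R) ht0
    rwa [finrank_euclideanSpace_fin] at this
  have h3 : t • Metric.closedBall (0 : EuclideanSpace ℝ (Fin d)) R
      = Metric.closedBall 0 (t * R) := by
    rw [smul_closedBall _ _ hR, smul_zero, Real.norm_eq_abs, abs_of_pos ht0]
  have h4 : ∫ w in Metric.closedBall (0 : EuclideanSpace ℝ (Fin d)) (t * R), g (x + w)
      = ∫ v in Metric.closedBall x (t * R), g v := by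
    have := ball_translate (fun w => g (x + w)) x (t * R)
    simpa using this.symm
  have h5 : ∫ v in Metric.closedBall x (t * R), g v
      ≤ ∫ w in Metric.closedBall x R, g w := by
    refine setIntegral_mono_set hint ?_ ?_
    · exact Filter.Eventually.of_forall fun w => hg w
    · exact (Metric.closedBall_subset_closedBall (by nlinarith)).eventuallyLE
  rw [h1, h2, h3, h4]
  rw [smul_eq_mul]
  have : (0:ℝ) ≤ (t ^ d)⁻¹ := by positivity
  exact mul_le_mul_of_nonneg_left h5 this
lemma inner_integral_bound {p q : ℝ} (hpq : p.HolderConjugate q)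
    (g : EuclideanSpace ℝ (Fin d) → ℝ) (hgmeas : Measurable g) (hgnn : ∀ w, 0 ≤ g w)
    {x : EuclideanSpace ℝ (Fin d)} {R : ℝ} (hR : 0 < R)
    {C : ℝ} (hgb : ∀ w ∈ Metric.closedBall x R, g w ≤ C)
    (hgp_int : IntegrableOn (fun w => g w ^ p) (Metric.closedBall x R))
    {t : ℝ} (ht0 : 0 < t) (ht1 : t ≤ 1) :
    ∫ z in Metric.closedBall x R, g (x + t • (z - x)) * ‖z - x‖
      ≤ t ^ (-((d:ℝ)/p)) * ((∫ w in Metric.closedBall x R, g w ^ p) ^ (1/p) *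
        (R * (volume (Metric.closedBall x R)).toReal ^ (1/q))) := by
  set V := Metric.closedBall x R with hV
  haveI : IsFiniteMeasure (volume.restrict V) :=
    ⟨by rw [Measure.restrict_apply_univ]; exact measure_closedBall_lt_top⟩
  set m := (volume V).toReal with hm
  have hm0 : 0 ≤ m := ENNReal.toReal_nonneg
  have hmap : Measurable fun z : EuclideanSpace ℝ (Fin d) => x + t • (z - x) :=
    (measurable_id.sub measurable_const).const_smul t |>.const_add x
  have hmapV : ∀ z ∈ V, x + t • (z - x) ∈ V := fun z hz =>
    (convex_closedBall x R).add_smul_sub_mem (Metric.mem_closedBall_self hR.le) hz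
      ⟨ht0.le, ht1⟩
  have hf : MemLp (fun z => g (x + t • (z - x))) (ENNReal.ofReal p) (volume.restrict V) := by
    refine MemLp.of_bound ((hgmeas.comp hmap).aestronglyMeasurable) (max C 0) ?_
    rw [ae_restrict_iff' measurableSet_closedBall]
    refine Filter.Eventually.of_forall fun z hz => ?_
    rw [Real.norm_of_nonneg (hgnn _)]
    exact le_max_of_le_left (hgb _ (hmapV z hz))
  have hh : MemLp (fun z : EuclideanSpace ℝ (Fin d) => ‖z - x‖) (ENNReal.ofReal q)
      (volume.restrict V) := by
    refine MemLp.of_bound ((measurable_id.sub measurable_const).norm.aestronglyMeasurable) R ?_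
    rw [ae_restrict_iff' measurableSet_closedBall]
    refine Filter.Eventually.of_forall fun z hz => ?_
    rw [norm_norm]
    rwa [Metric.mem_closedBall, dist_eq_norm] at hz
  have holder := integral_mul_le_Lp_mul_Lq_of_nonneg hpq
    (Filter.Eventually.of_forall fun z => hgnn _)
    (Filter.Eventually.of_forall fun z => norm_nonneg _) hf hh
  -- bound factor 2 : (∫ ‖z-x‖^q)^(1/q) ≤ R * m^(1/q)
  have hq0 : (0:ℝ) < q := hpq.symm.pos
  have hfact2 : (∫ z in V, ‖z - x‖ ^ q) ^ (1/q) ≤ R * m ^ (1/q) := by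
    have hb : ∫ z in V, ‖z - x‖ ^ q ≤ ∫ _z in V, R ^ q := by
      refine setIntegral_mono_on ?_ (integrable_const _) measurableSet_closedBall ?_
      · have hc : Continuous fun z : EuclideanSpace ℝ (Fin d) => ‖z - x‖ ^ q :=
          (continuous_id.sub continuous_const).norm.rpow_const fun z => Or.inr hq0.le
        exact hc.continuousOn.integrableOn_compact (isCompact_closedBall x R)
      · intro z hz
        rw [Metric.mem_closedBall, dist_eq_norm] at hz
        exact Real.rpow_le_rpow (norm_nonneg _) hz hq0.le
    have hconst : ∫ _z in V, R ^ q = m * R ^ q := by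
      rw [setIntegral_const, measureReal_def, smul_eq_mul]
    calc (∫ z in V, ‖z - x‖ ^ q) ^ (1/q)
        ≤ (m * R ^ q) ^ (1/q) := by
          refine Real.rpow_le_rpow ?_ (by rw [← hconst]; exact hb) (by positivity)
          exact setIntegral_nonneg measurableSet_closedBall fun z _ => by positivity
      _ = R * m ^ (1/q) := by
          rw [Real.mul_rpow hm0 (by positivity), ← Real.rpow_mul hR.le,
            mul_one_div_cancel hq0.ne', Real.rpow_one, mul_comm]
  have hp0 : (0:ℝ) < p := hpq.pos
  have hN0 : (0:ℝ) ≤ ∫ w in V, g w ^ p :=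
    setIntegral_nonneg measurableSet_closedBall fun w _ => Real.rpow_nonneg (hgnn w) p
  have hfact1 : (∫ z in V, g (x + t • (z - x)) ^ p) ^ (1/p)
      ≤ t ^ (-((d:ℝ)/p)) * (∫ w in V, g w ^ p) ^ (1/p) := by
    have hsc := scaling_bound (fun w => g w ^ p) (fun w => Real.rpow_nonneg (hgnn w) p) x hR.le ht0 ht1 hgp_int
    calc (∫ z in V, g (x + t • (z - x)) ^ p) ^ (1/p)
        ≤ ((t ^ d)⁻¹ * ∫ w in V, g w ^ p) ^ (1/p) := by
          refine Real.rpow_le_rpow ?_ hsc (by positivity)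
          exact setIntegral_nonneg measurableSet_closedBall fun z _ => Real.rpow_nonneg (hgnn _) p
      _ = t ^ (-((d:ℝ)/p)) * (∫ w in V, g w ^ p) ^ (1/p) := by
          rw [Real.mul_rpow (by positivity) hN0]
          congr 1
          rw [← Real.rpow_natCast t d, ← Real.rpow_neg ht0.le, ← Real.rpow_mul ht0.le]
          congr 1
          rw [neg_mul, mul_one_div]
  have ht' : (0:ℝ) ≤ t ^ (-((d:ℝ)/p)) := Real.rpow_nonneg ht0.le _
  calc ∫ z in V, g (x + t • (z - x)) * ‖z - x‖
      ≤ (∫ z in V, g (x + t • (z - x)) ^ p) ^ (1/p) * (∫ z in V, ‖z - x‖ ^ q) ^ (1/q) :=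
        holder
    _ ≤ (t ^ (-((d:ℝ)/p)) * (∫ w in V, g w ^ p) ^ (1/p)) * (R * m ^ (1/q)) := by
        refine mul_le_mul hfact1 hfact2 ?_ (mul_nonneg ht' (Real.rpow_nonneg hN0 _))
        exact Real.rpow_nonneg (setIntegral_nonneg measurableSet_closedBall
          fun z _ => Real.rpow_nonneg (norm_nonneg _) q) _
    _ = t ^ (-((d:ℝ)/p)) * ((∫ w in V, g w ^ p) ^ (1/p) * (R * m ^ (1/q))) := by ring
end aux

/-- pointwise estimate on the deviation of `y` from its ball average. -/
theorem pointwise_average_deviation_estimate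
    {d : ℕ} (p : ℝ) (hdp : (d : ℝ) < p)
    (Ω : Set (EuclideanSpace ℝ (Fin d))) (hΩopen : IsOpen Ω)
    (y : EuclideanSpace ℝ (Fin d) → ℝ) (hy : ContDiffOn ℝ 1 y Ω)
    (δ : ℝ) (hδ : 0 < δ)
    (x : EuclideanSpace ℝ (Fin d)) (hxΩ : x ∈ Ω)
    (hball : Metric.closedBall x (δ / 2) ⊆ Ω)
    (hgrad : MemLp (gradient y) (ENNReal.ofReal p)
      (volume.restrict (Metric.closedBall x (δ / 2)))) :
    |y x - Qavg δ y x|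
      ≤ (1 - (d : ℝ) / p)⁻¹ * δ *
          (volume (Metric.closedBall x (δ / 2))).toReal ^ (-(1 / p) : ℝ) *
          (eLpNorm (gradient y) (ENNReal.ofReal p)
            (volume.restrict (Metric.closedBall x (δ / 2)))).toReal := by
  have hr : (0:ℝ) < δ / 2 := by linarith
  set V : Set (EuclideanSpace ℝ (Fin d)) := Metric.closedBall x (δ / 2) with hVdef
  have hp0 : (0:ℝ) < p := (Nat.cast_nonneg d).trans_lt hdp
  have hdp1 : (d:ℝ)/p < 1 := (div_lt_one hp0).2 hdp
  have h1dp : (0:ℝ) < 1 - (d:ℝ)/p := by linarith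
  have hμfin : volume V ≠ ⊤ := measure_closedBall_lt_top.ne
  have hμpos : volume V ≠ 0 := (Metric.measure_closedBall_pos volume x hr).ne'
  set m := (volume V).toReal with hmdef
  have hm0 : (0:ℝ) < m := ENNReal.toReal_pos hμpos hμfin
  set Ne := (eLpNorm (gradient y) (ENNReal.ofReal p) (volume.restrict V)).toReal with hNedef
  have hNe0 : 0 ≤ Ne := ENNReal.toReal_nonneg
  have hRHS0 : (0:ℝ) ≤ (1 - (d:ℝ)/p)⁻¹ * δ * m ^ (-(1/p) : ℝ) * Ne := by
    have : (0:ℝ) ≤ (1 - (d:ℝ)/p)⁻¹ := inv_nonneg.2 h1dp.le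
    have h2 : (0:ℝ) ≤ m ^ (-(1/p) : ℝ) := Real.rpow_nonneg hm0.le _
    positivity
  -- the case of a 0-dimensional space
  rcases Nat.eq_zero_or_pos d with hd0 | hd0
  · haveI : Subsingleton (EuclideanSpace ℝ (Fin d)) := by
      subst hd0
      exact ⟨fun a b => by ext i; exact i.elim0⟩
    have hyc : y = fun _ => y x := funext fun z => by rw [Subsingleton.elim z x]
    have hQ : Qavg δ y x = y x := by
      rw [Qavg]
      conv_lhs => rw [hyc]
      rw [setIntegral_const, measureReal_def, smul_eq_mul, ← mul_assoc, inv_mul_cancel₀ hm0.ne', one_mul]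
    rw [hQ, sub_self, abs_zero]
    exact hRHS0
  -- main case
  have hp1 : (1:ℝ) < p := by
    have : (1:ℝ) ≤ (d:ℝ) := by exact_mod_cast hd0
    linarith
  set q := Real.conjExponent p with hqdef
  have hpq : p.HolderConjugate q := Real.HolderConjugate.conjExponent hp1
  have hq_eq : 1/q = 1 - 1/p := by
    have h := hpq.inv_add_inv_eq_one
    rw [one_div, one_div]
    linarith [h]
  set g : EuclideanSpace ℝ (Fin d) → ℝ := fun w => ‖gradient y w‖ with hgdef
  have hgnn : ∀ w, 0 ≤ g w := fun w => norm_nonneg _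
  have hgradmeas : Measurable (gradient y) := by
    have h1 : Measurable (fderiv ℝ y) := measurable_fderiv ℝ y
    exact ((InnerProductSpace.toDual ℝ
      (EuclideanSpace ℝ (Fin d))).symm.continuous.measurable).comp h1
  have hgmeas : Measurable g := hgradmeas.norm
  have hfd : ContinuousOn (fderiv ℝ y) Ω := hy.continuousOn_fderiv_of_isOpen hΩopen le_rfl
  have hgradcont : ContinuousOn (gradient y) Ω :=
    (InnerProductSpace.toDual ℝ
      (EuclideanSpace ℝ (Fin d))).symm.continuous.comp_continuousOn hfd
  have hgcontV : ContinuousOn g V := (hgradcont.norm).mono hball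
  obtain ⟨C, hC⟩ := (isCompact_closedBall x (δ/2)).exists_bound_of_continuousOn hgcontV
  have hgb : ∀ w ∈ V, g w ≤ C := fun w hw => (le_abs_self _).trans
    (by simpa [Real.norm_eq_abs] using hC w hw)
  have hgp_int : IntegrableOn (fun w => g w ^ p) V := by
    have h := hgrad.integrable_norm_rpow (ENNReal.ofReal_pos.2 hp0).ne' ENNReal.ofReal_ne_top
    simp only [ENNReal.toReal_ofReal hp0.le] at h
    exact h
  set N : ℝ := (∫ w in V, g w ^ p) ^ (1/p) with hNdef
  have hintN0 : (0:ℝ) ≤ ∫ w in V, g w ^ p :=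
    setIntegral_nonneg measurableSet_closedBall fun w _ => Real.rpow_nonneg (hgnn w) p
  have hN0 : (0:ℝ) ≤ N := Real.rpow_nonneg hintN0 _
  have hNe_eq : Ne = N := by
    rw [hNedef, hgrad.eLpNorm_eq_integral_rpow_norm (ENNReal.ofReal_pos.2 hp0).ne'
      ENNReal.ofReal_ne_top, ENNReal.toReal_ofReal]
    · rw [ENNReal.toReal_ofReal hp0.le, hNdef, one_div]
    · rw [ENNReal.toReal_ofReal hp0.le]
      exact Real.rpow_nonneg (integral_nonneg fun w => Real.rpow_nonneg (norm_nonneg _) _) _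
  -- step 2 : reduce to the integral of |y x - y z|
  have hyint : IntegrableOn y V :=
    ((hy.continuousOn).mono hball).integrableOn_compact (isCompact_closedBall x (δ/2))
  have hconst_int : IntegrableOn (fun _ : EuclideanSpace ℝ (Fin d) => y x) V :=
    integrableOn_const measure_closedBall_lt_top.ne
  have hQ : y x - Qavg δ y x = m⁻¹ * ∫ z in V, (y x - y z) := by
    have h1 : ∫ z in V, (y x - y z) = m * y x - ∫ z in V, y z := by
      rw [integral_sub hconst_int hyint, setIntegral_const, measureReal_def, smul_eq_mul]
    rw [Qavg, h1, mul_sub, ← mul_assoc, inv_mul_cancel₀ hm0.ne', one_mul]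
  have habsint : |∫ z in V, (y x - y z)| ≤ ∫ z in V, |y x - y z| := by
    calc |∫ z in V, (y x - y z)| = ‖∫ z in V, (y x - y z)‖ := (Real.norm_eq_abs _).symm
      _ ≤ ∫ z in V, ‖y x - y z‖ := norm_integral_le_integral_norm _
      _ = ∫ z in V, |y x - y z| := by simp [Real.norm_eq_abs]
  have step2 : |y x - Qavg δ y x| ≤ m⁻¹ * ∫ z in V, |y x - y z| := by
    rw [hQ, abs_mul, abs_of_nonneg (inv_nonneg.2 hm0.le)]
    exact mul_le_mul_of_nonneg_left habsint (inv_nonneg.2 hm0.le)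
  -- double integral setup
  set F : EuclideanSpace ℝ (Fin d) × ℝ → ℝ :=
    fun zt => g (x + zt.2 • (zt.1 - x)) * ‖zt.1 - x‖ with hFdef
  have hψ : Continuous fun zt : EuclideanSpace ℝ (Fin d) × ℝ => x + zt.2 • (zt.1 - x) :=
    continuous_const.add (continuous_snd.smul (continuous_fst.sub continuous_const))
  have hmapsto : ∀ zt : EuclideanSpace ℝ (Fin d) × ℝ, zt ∈ V ×ˢ Set.Icc (0:ℝ) 1 →
      x + zt.2 • (zt.1 - x) ∈ V := fun zt hzt =>
    (convex_closedBall x (δ/2)).add_smul_sub_mem (Metric.mem_closedBall_self hr.le)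
      hzt.1 hzt.2
  have hFcont : ContinuousOn F (V ×ˢ Set.Icc (0:ℝ) 1) :=
    (hgcontV.comp hψ.continuousOn hmapsto).mul
      ((continuous_fst.sub continuous_const).norm.continuousOn)
  have hFint : IntegrableOn F (V ×ˢ Set.Icc (0:ℝ) 1) :=
    hFcont.integrableOn_compact ((isCompact_closedBall x (δ/2)).prod isCompact_Icc)
  have hFprod : Integrable F ((volume.restrict V).prod (volume.restrict (Set.Icc (0:ℝ) 1))) := by
    rw [Measure.prod_restrict]
    exact hFint
  have hH_int : Integrable (fun z => ∫ t in Set.Icc (0:ℝ) 1, F (z, t)) (volume.restrict V) :=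
    hFprod.integral_prod_left
  have hI_int : Integrable (fun t => ∫ z in V, F (z, t))
      (volume.restrict (Set.Icc (0:ℝ) 1)) := hFprod.integral_prod_right
  have hswap : ∫ z in V, ∫ t in Set.Icc (0:ℝ) 1, F (z, t)
      = ∫ t in Set.Icc (0:ℝ) 1, ∫ z in V, F (z, t) :=
    integral_integral_swap (f := fun z t => F (z, t)) hFprod
  -- step 3 : pointwise FTC bound
  have hyabs_int : IntegrableOn (fun z => |y x - y z|) V := (hconst_int.sub hyint).abs
  have step3 : ∫ z in V, |y x - y z| ≤ ∫ z in V, ∫ t in Set.Icc (0:ℝ) 1, F (z, t) := by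
    refine setIntegral_mono_on hyabs_int hH_int measurableSet_closedBall fun z hz => ?_
    have hft := ftc_bound hΩopen hy hball hz hr.le
    have heq : ∫ t in Set.Icc (0:ℝ) 1, F (z, t)
        = (∫ t in (0:ℝ)..1, g (x + t • (z - x))) * ‖z - x‖ := by
      rw [MeasureTheory.integral_Icc_eq_integral_Ioc,
        ← intervalIntegral.integral_of_le zero_le_one, ← intervalIntegral.integral_mul_const]
    rw [heq]
    exact hft
  -- step 5 : Hölder bound on the inner integral
  set K : ℝ := N * ((δ/2) * m ^ (1/q)) with hKdef
  have hK0 : (0:ℝ) ≤ K := mul_nonneg hN0 (mul_nonneg hr.le (Real.rpow_nonneg hm0.le _))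
  have step5 : ∀ t ∈ Set.Ioc (0:ℝ) 1, ∫ z in V, F (z, t) ≤ t ^ (-((d:ℝ)/p)) * K := by
    intro t ht
    have h := inner_integral_bound hpq g hgmeas hgnn hr hgb hgp_int ht.1 ht.2
    simp only [hFdef, hKdef, hNdef]
    exact h
  -- step 6 : integrate in t
  have hIoc_int : IntegrableOn (fun t => ∫ z in V, F (z, t)) (Set.Ioc (0:ℝ) 1) :=
    IntegrableOn.mono_set hI_int Set.Ioc_subset_Icc_self
  have hrpow_int : IntegrableOn (fun t : ℝ => t ^ (-((d:ℝ)/p)) * K) (Set.Ioc (0:ℝ) 1) := by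
    have h : IntervalIntegrable (fun t : ℝ => t ^ (-((d:ℝ)/p))) volume 0 1 :=
      intervalIntegral.intervalIntegrable_rpow' (by linarith)
    rw [intervalIntegrable_iff_integrableOn_Ioc_of_le zero_le_one] at h
    exact h.mul_const K
  have hexp_pos : (0:ℝ) < -((d:ℝ)/p) + 1 := by linarith
  have step6 : ∫ t in Set.Icc (0:ℝ) 1, ∫ z in V, F (z, t) ≤ (1 - (d:ℝ)/p)⁻¹ * K := by
    rw [MeasureTheory.integral_Icc_eq_integral_Ioc]
    have hmono : ∫ t in Set.Ioc (0:ℝ) 1, ∫ z in V, F (z, t)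
        ≤ ∫ t in Set.Ioc (0:ℝ) 1, t ^ (-((d:ℝ)/p)) * K :=
      setIntegral_mono_on hIoc_int hrpow_int measurableSet_Ioc step5
    have hval : ∫ t in Set.Ioc (0:ℝ) 1, t ^ (-((d:ℝ)/p)) * K = (1 - (d:ℝ)/p)⁻¹ * K := by
      rw [← intervalIntegral.integral_of_le zero_le_one, intervalIntegral.integral_mul_const,
        integral_rpow (Or.inl (by linarith)), Real.one_rpow,
        Real.zero_rpow hexp_pos.ne']
      have h1 : -((d:ℝ)/p) + 1 = 1 - (d:ℝ)/p := by ring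
      rw [h1, sub_zero, one_div]
    linarith [hmono, hval.le, hval.ge]
  -- final assembly
  calc |y x - Qavg δ y x| ≤ m⁻¹ * ∫ z in V, |y x - y z| := step2
    _ ≤ m⁻¹ * ((1 - (d:ℝ)/p)⁻¹ * K) := by
        refine mul_le_mul_of_nonneg_left ?_ (inv_nonneg.2 hm0.le)
        calc ∫ z in V, |y x - y z|
            ≤ ∫ z in V, ∫ t in Set.Icc (0:ℝ) 1, F (z, t) := step3
          _ = ∫ t in Set.Icc (0:ℝ) 1, ∫ z in V, F (z, t) := hswap
          _ ≤ (1 - (d:ℝ)/p)⁻¹ * K := step6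
    _ ≤ (1 - (d:ℝ)/p)⁻¹ * δ * m ^ (-(1/p):ℝ) * Ne := by
        rw [hNe_eq, hKdef]
        have hmm : m⁻¹ * m ^ (1/q) = m ^ (-(1/p):ℝ) := by
          rw [hq_eq, ← Real.rpow_neg_one m, ← Real.rpow_add hm0]
          congr 1
          ring
        have hexp0 : (0:ℝ) ≤ m ^ (-(1/p):ℝ) := Real.rpow_nonneg hm0.le _
        have h2 : δ/2 ≤ δ := by linarith
        calc m⁻¹ * ((1 - (d:ℝ)/p)⁻¹ * (N * ((δ/2) * m ^ (1/q))))
            = (1 - (d:ℝ)/p)⁻¹ * (δ/2) * (m⁻¹ * m ^ (1/q)) * N := by ring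
          _ = (1 - (d:ℝ)/p)⁻¹ * (δ/2) * m ^ (-(1/p):ℝ) * N := by rw [hmm]
          _ ≤ (1 - (d:ℝ)/p)⁻¹ * δ * m ^ (-(1/p):ℝ) * N := by
              refine mul_le_mul_of_nonneg_right (mul_le_mul_of_nonneg_right ?_ hexp0) hN0
              exact mul_le_mul_of_nonneg_left h2 (inv_nonneg.2 h1dp.le)
end

section
/- Let Ω ⊆ ℝ² be a measurable set with 0 < |Ω| < ∞, let K : Ω → ℝ be measurable with 0 < α ≤ K(x) ≤ β for all x ∈ Ω, let q ∈ L²(Ω), and fix i ∈ {1,2}. Let u : Ω → ℝ be a differentiable function with u ∈ L²(Ω), ∇u ∈ L²(Ω; ℝ²), and ∫_Ω ∂u/∂x_i dx = 0. Define K̃_{ii} := |Ω|⁻¹ ∫_Ω K(x)·|∇u(x) + e_i|² dx − |Ω|⁻¹ ∫_Ω q(x)·u(x) dx. If |Ω|⁻¹·(α·‖∇u‖²_{L²(Ω)} − ‖q‖_{L²(Ω)}·‖u‖_{L²(Ω)}) ≥ −α/2, then K̃_{ii} ≥ α/2. Moreover, the averaged flux κ := |Ω|⁻¹ ∫_Ω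 K(x)·(∂u/∂x_i(x) + 1) dx satisfies |κ| ≤ β·(1 + |Ω|^{−1/2}·‖∂u/∂x_i‖_{L²(Ω)}). -/
open MeasureTheory

section Aux
variable {X : Type*} [MeasurableSpace X] (μ : Measure X)
variable {E : Type*} [NormedAddCommGroup E] [InnerProductSpace ℝ E]

lemma aux_inner_eq {f g : X → E} (hf : MemLp f 2 μ) (hg : MemLp g 2 μ) :
    ∫ x, (inner ℝ (f x) (g x) : ℝ) ∂μ = inner ℝ (hf.toLp f) (hg.toLp g) := by
  rw [MeasureTheory.L2.inner_def]
  refine integral_congr_ae ?_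
  filter_upwards [hf.coeFn_toLp, hg.coeFn_toLp] with x h1 h2
  rw [h1, h2]

lemma aux_integrable_inner {f g : X → E} (hf : MemLp f 2 μ) (hg : MemLp g 2 μ) :
    Integrable (fun x => (inner ℝ (f x) (g x) : ℝ)) μ := by
  refine (L2.integrable_inner (𝕜 := ℝ) (hf.toLp f) (hg.toLp g)).congr ?_
  filter_upwards [hf.coeFn_toLp, hg.coeFn_toLp] with x h1 h2
  rw [h1, h2]

lemma aux_cs {f g : X → E} (hf : MemLp f 2 μ) (hg : MemLp g 2 μ) :
    ∫ x, (inner ℝ (f x) (g x) : ℝ) ∂μ ≤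
      (eLpNorm f 2 μ).toReal * (eLpNorm g 2 μ).toReal := by
  rw [aux_inner_eq μ hf hg]
  refine (real_inner_le_norm _ _).trans ?_
  rw [Lp.norm_toLp f hf, Lp.norm_toLp g hg]

lemma aux_sq {f : X → E} (hf : MemLp f 2 μ) :
    ∫ x, ‖f x‖ ^ 2 ∂μ = (eLpNorm f 2 μ).toReal ^ 2 := by
  have h := aux_inner_eq μ hf hf
  simp_rw [real_inner_self_eq_norm_sq] at h
  rw [h, Lp.norm_toLp f hf]

lemma aux_int_sq {f : X → E} (hf : MemLp f 2 μ) :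
    Integrable (fun x => ‖f x‖ ^ 2) μ := by
  have h := aux_integrable_inner μ hf hf
  simp_rw [real_inner_self_eq_norm_sq] at h
  exact h

end Aux

/-- uniform lower ellipticity bound for the diagonal entry of the
perturbed upscaled coefficient, and a bound on the averaged flux. -/
theorem upscaled_coefficient_uniform_bounds
    (Ω : Set (EuclideanSpace ℝ (Fin 2))) (hΩmeas : MeasurableSet Ω)
    (h0 : 0 < volume Ω) (hfin : volume Ω < ⊤)
    (K : EuclideanSpace ℝ (Fin 2) → ℝ) (hKmeas : Measurable K)
    (α β : ℝ) (hα : 0 < α) (hKbound : ∀ x ∈ Ω, α ≤ K x ∧ K x ≤ β)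
    (q : EuclideanSpace ℝ (Fin 2) → ℝ) (hq : MemLp q 2 (volume.restrict Ω))
    (i : Fin 2)
    (u : EuclideanSpace ℝ (Fin 2) → ℝ) (hu : Differentiable ℝ u)
    (huL2 : MemLp u 2 (volume.restrict Ω))
    (hgrad : MemLp (gradient u) 2 (volume.restrict Ω))
    (hzero : ∫ x in Ω, fderiv ℝ u x (EuclideanSpace.single i 1) = 0) :
    (((volume Ω).toReal⁻¹ *
          (α * (eLpNorm (gradient u) 2 (volume.restrict Ω)).toReal ^ 2 -
            (eLpNorm q 2 (volume.restrict Ω)).toReal *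
              (eLpNorm u 2 (volume.restrict Ω)).toReal) ≥ -(α / 2)) →
        (volume Ω).toReal⁻¹ *
            (∫ x in Ω, K x * ‖gradient u x + EuclideanSpace.single i 1‖ ^ 2) -
          (volume Ω).toReal⁻¹ * (∫ x in Ω, q x * u x) ≥ α / 2) ∧
    |(volume Ω).toReal⁻¹ *
        ∫ x in Ω, K x * (fderiv ℝ u x (EuclideanSpace.single i 1) + 1)|
      ≤ β * (1 + (volume Ω).toReal ^ (-(1 / 2) : ℝ) *
          (eLpNorm (fun x => fderiv ℝ u x (EuclideanSpace.single i 1)) 2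
            (volume.restrict Ω)).toReal) := by
  set μ := volume.restrict Ω with hμdef
  haveI : IsFiniteMeasure μ := ⟨by rwa [hμdef, Measure.restrict_apply_univ]⟩
  have hμuniv : μ Set.univ = volume Ω := by rw [hμdef, Measure.restrict_apply_univ]
  have hμ0 : μ ≠ 0 := by
    intro h
    rw [h] at hμuniv
    simp at hμuniv
    exact h0.ne' hμuniv.symm
  set V := (volume Ω).toReal with hVdef
  have hV : 0 < V := ENNReal.toReal_pos h0.ne' hfin.ne
  set e : EuclideanSpace ℝ (Fin 2) := EuclideanSpace.single i 1 with hedef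
  have he : ‖e‖ = 1 := by simp [hedef]
  -- link gradient and fderiv
  have hginner : ∀ x, (inner ℝ (gradient u x) e : ℝ) = fderiv ℝ u x e := fun x => by
    simp [gradient, InnerProductSpace.toDual_symm_apply]
  -- the partial derivative function
  set h : EuclideanSpace ℝ (Fin 2) → ℝ := fun x => fderiv ℝ u x e with hhdef
  have hh : MemLp h 2 μ := by
    have : h = fun x => (inner ℝ (gradient u x) e : ℝ) := funext fun x => (hginner x).symm
    rw [this]
    exact hgrad.inner_const e
  have hh_int : Integrable h μ := hh.integrable one_le_two
  -- K is a.e. bounded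
  have hKae : ∀ᵐ x ∂μ, α ≤ K x ∧ K x ≤ β := by
    filter_upwards [ae_restrict_mem hΩmeas] with x hx
    exact hKbound x hx
  have hKabs : ∀ᵐ x ∂μ, ‖K x‖ ≤ β := by
    filter_upwards [hKae] with x hx
    rw [Real.norm_eq_abs, abs_of_pos (hα.trans_le hx.1)]
    exact hx.2
  constructor
  · -- Part 1
    intro hyp
    set g := gradient u with hgdef
    have hfe : MemLp (fun x => g x + e) 2 μ := hgrad.add (memLp_const e)
    have h_nsq_int : Integrable (fun x => ‖g x + e‖ ^ 2) μ := aux_int_sq μ hfe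
    have hKf_int : Integrable (fun x => K x * ‖g x + e‖ ^ 2) μ :=
      h_nsq_int.bdd_mul hKmeas.aestronglyMeasurable hKabs
    -- lower bound the K-weighted integral
    have hA : α * ∫ x, ‖g x + e‖ ^ 2 ∂μ ≤ ∫ x, K x * ‖g x + e‖ ^ 2 ∂μ := by
      rw [← integral_const_mul]
      refine integral_mono_ae (h_nsq_int.const_mul α) hKf_int ?_
      filter_upwards [hKae] with x hx
      exact mul_le_mul_of_nonneg_right hx.1 (sq_nonneg _)
    -- expand the square
    have hB : ∫ x, ‖g x + e‖ ^ 2 ∂μ =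
        (eLpNorm g 2 μ).toReal ^ 2 + V := by
      have hexp : ∀ x, ‖g x + e‖ ^ 2
          = ‖g x‖ ^ 2 + 2 * (inner ℝ (g x) e : ℝ) + 1 := by
        intro x
        rw [norm_add_sq_real, he, one_pow]
      simp_rw [hexp]
      have Int2 : Integrable (fun x => 2 * (inner ℝ (g x) e : ℝ)) μ :=
        (aux_integrable_inner μ hgrad (memLp_const e)).const_mul 2
      have Int12 : Integrable (fun x => ‖g x‖ ^ 2 + 2 * (inner ℝ (g x) e : ℝ)) μ :=
        (aux_int_sq μ hgrad).add Int2
      rw [integral_add Int12 (integrable_const 1),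
        integral_add (aux_int_sq μ hgrad) Int2,
        integral_const, measureReal_def, hμuniv, smul_eq_mul, mul_one, integral_const_mul]
      have hz : ∫ x, (inner ℝ (g x) e : ℝ) ∂μ = 0 := by
        simp_rw [hginner]
        exact hzero
      rw [hz, aux_sq μ hgrad]
      ring
    -- Cauchy-Schwarz for the q-u term
    have hD : ∫ x, q x * u x ∂μ ≤
        (eLpNorm q 2 μ).toReal * (eLpNorm u 2 μ).toReal := by
      have := aux_cs μ hq huL2
      simpa [RCLike.inner_apply, conj_trivial, mul_comm] using this
    set Ng := (eLpNorm g 2 μ).toReal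
    set NQ := (eLpNorm q 2 μ).toReal
    set NU := (eLpNorm u 2 μ).toReal
    have h1 : α * (Ng ^ 2 + V) ≤ ∫ x, K x * ‖g x + e‖ ^ 2 ∂μ := by
      calc α * (Ng ^ 2 + V) = α * ∫ x, ‖g x + e‖ ^ 2 ∂μ := by rw [hB]
        _ ≤ _ := hA
    have hVinv : (0:ℝ) < V⁻¹ := inv_pos.2 hV
    have hVV : V⁻¹ * V = 1 := inv_mul_cancel₀ hV.ne'
    have l1 : V⁻¹ * (α * (Ng ^ 2 + V)) ≤ V⁻¹ * ∫ x, K x * ‖g x + e‖ ^ 2 ∂μ :=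
      mul_le_mul_of_nonneg_left h1 hVinv.le
    have l2 : V⁻¹ * ∫ x, q x * u x ∂μ ≤ V⁻¹ * (NQ * NU) :=
      mul_le_mul_of_nonneg_left hD hVinv.le
    have key : V⁻¹ * (α * (Ng ^ 2 + V)) - V⁻¹ * (NQ * NU)
        = V⁻¹ * (α * Ng ^ 2 - NQ * NU) + α := by
      have : V⁻¹ * (α * V) = α := by
        rw [mul_comm α V, ← mul_assoc, hVV, one_mul]
      nlinarith [this]
    have := hyp
    linarith [l1, l2, key, hyp]
  · -- Part 2
    have hK1_int : Integrable (fun x => K x * (h x + 1)) μ :=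
      (hh_int.add (integrable_const 1)).bdd_mul hKmeas.aestronglyMeasurable hKabs
    have habs_int : Integrable (fun x => |h x|) μ := hh_int.abs
    have hβpos : 0 < β := by
      -- Ω has positive measure hence is nonempty
      obtain ⟨x, hx⟩ : Ω.Nonempty := by
        by_contra hcon
        rw [Set.not_nonempty_iff_eq_empty] at hcon
        simp [hcon] at h0
      exact hα.trans_le ((hKbound x hx).1.trans (hKbound x hx).2)
    set Nh := (eLpNorm h 2 μ).toReal with hNh
    -- Cauchy-Schwarz: ∫ |h| ≤ Nh * sqrt V
    have hCS : ∫ x, |h x| ∂μ ≤ Nh * V ^ ((1:ℝ)/2) := by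
      have habsmem : MemLp (fun x => |h x|) 2 μ := by
        have := hh.norm
        simpa [Real.norm_eq_abs] using this
      have hc := aux_cs μ habsmem (memLp_const (1:ℝ))
      have heq : ∫ x, (inner ℝ (|h x|) (1:ℝ) : ℝ) ∂μ = ∫ x, |h x| ∂μ := by
        simp [RCLike.inner_apply, conj_trivial]
      rw [heq] at hc
      have hnorm_abs : eLpNorm (fun x => |h x|) 2 μ = eLpNorm h 2 μ := by
        rw [← eLpNorm_norm h]
        simp [Real.norm_eq_abs]
      have hconst : (eLpNorm (fun _ => (1:ℝ)) 2 μ).toReal = V ^ ((1:ℝ)/2) := by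
        rw [eLpNorm_const (1:ℝ) two_ne_zero hμ0]
        simp only [nnnorm_one, enorm_one, ENNReal.coe_one, one_mul, hμuniv]
        rw [← ENNReal.toReal_rpow]
        norm_num
        rfl
      rw [hnorm_abs, hconst] at hc
      exact hc
    -- pointwise bound and integrate
    have hpt : ∀ᵐ x ∂μ, |K x * (h x + 1)| ≤ β * (|h x| + 1) := by
      filter_upwards [hKabs] with x hx
      rw [abs_mul]
      refine mul_le_mul hx ((abs_add_le _ _).trans (by simp)) (abs_nonneg _) hβpos.le
    have hI : |∫ x, K x * (h x + 1) ∂μ| ≤ β * ((∫ x, |h x| ∂μ) + V) := by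
      calc |∫ x, K x * (h x + 1) ∂μ| ≤ ∫ x, |K x * (h x + 1)| ∂μ := by
            simpa only [Real.norm_eq_abs] using
              norm_integral_le_integral_norm (μ := μ) (fun x => K x * (h x + 1))
        _ ≤ ∫ x, β * (|h x| + 1) ∂μ := by
            refine integral_mono_ae hK1_int.abs ((habs_int.add (integrable_const 1)).const_mul β) hpt
        _ = β * ((∫ x, |h x| ∂μ) + V) := by
            rw [integral_const_mul, integral_add habs_int (integrable_const 1),
              integral_const, measureReal_def, hμuniv, smul_eq_mul, mul_one]
    have hIntAbs : 0 ≤ ∫ x, |h x| ∂μ := integral_nonneg fun x => abs_nonneg _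
    -- combine
    have hrw : V⁻¹ * V ^ ((1:ℝ)/2) = V ^ (-(1/2) : ℝ) := by
      rw [← Real.rpow_neg_one V, ← Real.rpow_add hV]
      norm_num
    have hVinv : (0:ℝ) < V⁻¹ := inv_pos.2 hV
    rw [abs_mul, abs_of_nonneg hVinv.le]
    calc V⁻¹ * |∫ x, K x * (h x + 1) ∂μ|
        ≤ V⁻¹ * (β * (Nh * V ^ ((1:ℝ)/2) + V)) := by
          refine mul_le_mul_of_nonneg_left (hI.trans ?_) hVinv.le
          have : (∫ x, |h x| ∂μ) + V ≤ Nh * V ^ ((1:ℝ)/2) + V := by linarith [hCS]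
          exact mul_le_mul_of_nonneg_left this hβpos.le
      _ = β * (1 + V ^ (-(1/2) : ℝ) * Nh) := by
          rw [← hrw]
          have hVV : V⁻¹ * V = 1 := inv_mul_cancel₀ hV.ne'
          linear_combination β * hVV
end

section
/- Let Ω ⊆ ℝ² be a measurable set with 0 < |Ω| < ∞, let K : Ω → ℝ be measurable with 0 < α ≤ K(x) ≤ β, let q ∈ L²(Ω), let c_p > 0, and fix i ∈ {1,2}. Let û, ũ : Ω → ℝ be differentiable functions with û, ũ ∈ L²(Ω) and ∇û, ∇ũ ∈ L²(Ω; ℝ²), satisfying the Poincaré inequalities ‖û‖_{L²(Ω)} ≤ c_p·‖∇û‖_{L²(Ω)} and ‖ũ‖_{L²(Ω)} ≤ c_p·‖∇ũ‖_{L²(Ω)}, and the energy identities ∫_Ω K·|∇û|² dx = ∫_Ω q·û dx and ∫_Ω K·|∇ũ|² dx = −∫_Ω K·(e_i·∇ũ) dx. Then ‖∇û‖_{L²(Ω)} ≤ (c_p/α)·‖q‖_{L²(Ω)} and ‖∇ũ‖_{L²(Ω)} ≤ |Ω|^{1/2}·β/α; consequently, for u := û + ũ, ‖u‖_{L²(Ω)}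 ≤ (c_p²/α)·‖q‖_{L²(Ω)} + c_p·|Ω|^{1/2}·β/α and ‖∇u‖_{L²(Ω)} ≤ (c_p/α)·‖q‖_{L²(Ω)} + |Ω|^{1/2}·β/α. -/
open MeasureTheory

open scoped RealInnerProductSpace

lemma aux_integral_inner_le {X : Type*} [MeasurableSpace X] {μ : Measure X}
    {E : Type*} [NormedAddCommGroup E] [InnerProductSpace ℝ E]
    {f g : X → E} (hf : MemLp f 2 μ) (hg : MemLp g 2 μ) :
    ∫ x, ⟪f x, g x⟫ ∂μ ≤ (eLpNorm f 2 μ).toReal * (eLpNorm g 2 μ).toReal := by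
  have h1 : ∫ x, ⟪f x, g x⟫ ∂μ = ⟪hf.toLp f, hg.toLp g⟫ := by
    rw [L2.inner_def]
    refine integral_congr_ae ?_
    filter_upwards [hf.coeFn_toLp, hg.coeFn_toLp] with x h1 h2
    rw [h1, h2]
  rw [h1, ← Lp.norm_toLp f hf, ← Lp.norm_toLp g hg]
  exact real_inner_le_norm _ _

lemma aux_integral_norm_sq {X : Type*} [MeasurableSpace X] {μ : Measure X}
    {E : Type*} [NormedAddCommGroup E] [InnerProductSpace ℝ E]
    {f : X → E} (hf : MemLp f 2 μ) :
    ∫ x, ‖f x‖ ^ 2 ∂μ = (eLpNorm f 2 μ).toReal ^ 2 := by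
  have h1 : ∫ x, ⟪f x, f x⟫ ∂μ = ⟪hf.toLp f, hf.toLp f⟫ := by
    rw [L2.inner_def]
    refine integral_congr_ae ?_
    filter_upwards [hf.coeFn_toLp] with x h1
    rw [h1]
  simp_rw [real_inner_self_eq_norm_sq] at h1
  rw [← Lp.norm_toLp f hf]
  exact h1

lemma aux_int_norm_sq_integrable {X : Type*} [MeasurableSpace X] {μ : Measure X}
    {E : Type*} [NormedAddCommGroup E]
    {f : X → E} (hf : MemLp f 2 μ) :
    Integrable (fun x => ‖f x‖ ^ 2) μ := by
  have := hf.integrable_norm_rpow (by norm_num) (by norm_num)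
  simpa [ENNReal.toReal_ofNat, Real.rpow_natCast] using this

/-- ε-independent H¹-type bounds for the fine-scale solution
`u = û + ũ` obtained from the energy identities and the Poincaré inequality. -/
theorem eps_independent_H1_bound
    (Ω : Set (EuclideanSpace ℝ (Fin 2))) (hΩmeas : MeasurableSet Ω)
    (h0 : 0 < volume Ω) (hfin : volume Ω < ⊤)
    (K : EuclideanSpace ℝ (Fin 2) → ℝ) (hKmeas : Measurable K)
    (α β : ℝ) (hα : 0 < α) (hKbound : ∀ x ∈ Ω, α ≤ K x ∧ K x ≤ β)
    (q : EuclideanSpace ℝ (Fin 2) → ℝ) (hq : MemLp q 2 (volume.restrict Ω))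
    (cp : ℝ) (hcp : 0 < cp) (i : Fin 2)
    (uhat utilde : EuclideanSpace ℝ (Fin 2) → ℝ)
    (huhat : Differentiable ℝ uhat) (hutilde : Differentiable ℝ utilde)
    (huhatL2 : MemLp uhat 2 (volume.restrict Ω))
    (hutildeL2 : MemLp utilde 2 (volume.restrict Ω))
    (hghat : MemLp (gradient uhat) 2 (volume.restrict Ω))
    (hgtilde : MemLp (gradient utilde) 2 (volume.restrict Ω))
    (hpoincare1 : (eLpNorm uhat 2 (volume.restrict Ω)).toReal
      ≤ cp * (eLpNorm (gradient uhat) 2 (volume.restrict Ω)).toReal)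
    (hpoincare2 : (eLpNorm utilde 2 (volume.restrict Ω)).toReal
      ≤ cp * (eLpNorm (gradient utilde) 2 (volume.restrict Ω)).toReal)
    (henergy1 : ∫ x in Ω, K x * ‖gradient uhat x‖ ^ 2 = ∫ x in Ω, q x * uhat x)
    (henergy2 : ∫ x in Ω, K x * ‖gradient utilde x‖ ^ 2
      = -∫ x in Ω, K x * ⟪(EuclideanSpace.single i 1 : EuclideanSpace ℝ (Fin 2)),
          gradient utilde x⟫) :
    (eLpNorm (gradient uhat) 2 (volume.restrict Ω)).toReal
        ≤ cp / α * (eLpNorm q 2 (volume.restrict Ω)).toReal ∧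
    (eLpNorm (gradient utilde) 2 (volume.restrict Ω)).toReal
        ≤ (volume Ω).toReal ^ ((1 : ℝ) / 2) * β / α ∧
    (eLpNorm (fun x => uhat x + utilde x) 2 (volume.restrict Ω)).toReal
        ≤ cp ^ 2 / α * (eLpNorm q 2 (volume.restrict Ω)).toReal +
            cp * (volume Ω).toReal ^ ((1 : ℝ) / 2) * β / α ∧
    (eLpNorm (gradient (fun x => uhat x + utilde x)) 2 (volume.restrict Ω)).toReal
        ≤ cp / α * (eLpNorm q 2 (volume.restrict Ω)).toReal +
            (volume Ω).toReal ^ ((1 : ℝ) / 2) * β / α := by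
  set μ := volume.restrict Ω with hμdef
  have hfinm : IsFiniteMeasure μ := ⟨by rw [hμdef, Measure.restrict_apply_univ]; exact hfin⟩
  have hμne : μ ≠ 0 := by
    intro h
    have : μ Set.univ = 0 := by rw [h]; rfl
    rw [hμdef, Measure.restrict_apply_univ] at this
    exact h0.ne' this
  -- Ω is nonempty, so α ≤ β
  obtain ⟨x₀, hx₀⟩ : Ω.Nonempty := by
    by_contra h
    rw [Set.not_nonempty_iff_eq_empty] at h
    simp [h] at h0
  have hαβ : α ≤ β := le_trans (hKbound x₀ hx₀).1 (hKbound x₀ hx₀).2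
  have hβ : 0 < β := lt_of_lt_of_le hα hαβ
  set A := (eLpNorm (gradient uhat) 2 μ).toReal with hA
  set B := (eLpNorm (gradient utilde) 2 μ).toReal with hB
  set Q := (eLpNorm q 2 μ).toReal with hQ
  set S := (volume Ω).toReal ^ ((1 : ℝ) / 2) with hS
  have hA0 : 0 ≤ A := ENNReal.toReal_nonneg
  have hB0 : 0 ≤ B := ENNReal.toReal_nonneg
  have hQ0 : 0 ≤ Q := ENNReal.toReal_nonneg
  have hS0 : 0 ≤ S := Real.rpow_nonneg ENNReal.toReal_nonneg _
  -- generic lower bound for energy integrals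
  have hlow : ∀ (g : EuclideanSpace ℝ (Fin 2) → EuclideanSpace ℝ (Fin 2)),
      MemLp g 2 μ →
      α * (eLpNorm g 2 μ).toReal ^ 2 ≤ ∫ x in Ω, K x * ‖g x‖ ^ 2 := by
    intro g hg
    have hInt2 : Integrable (fun x => ‖g x‖ ^ 2) μ := aux_int_norm_sq_integrable hg
    have hIntK : Integrable (fun x => K x * ‖g x‖ ^ 2) μ := by
      refine Integrable.mono' (hInt2.const_mul β)
        (hKmeas.aestronglyMeasurable.mul
          ((hg.aestronglyMeasurable.norm.pow 2)))
        ?_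
      filter_upwards [ae_restrict_mem hΩmeas] with x hx
      have h1 := (hKbound x hx).1
      have h2 := (hKbound x hx).2
      have : |K x * ‖g x‖ ^ 2| = K x * ‖g x‖ ^ 2 :=
        abs_of_nonneg (mul_nonneg (le_trans hα.le h1) (by positivity))
      rw [Real.norm_eq_abs, this]
      exact mul_le_mul_of_nonneg_right h2 (by positivity)
    have hmono : ∫ x, α * ‖g x‖ ^ 2 ∂μ ≤ ∫ x, K x * ‖g x‖ ^ 2 ∂μ := by
      refine integral_mono_ae (hInt2.const_mul α) hIntK ?_
      filter_upwards [ae_restrict_mem hΩmeas] with x hx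
      exact mul_le_mul_of_nonneg_right (hKbound x hx).1 (by positivity)
    calc α * (eLpNorm g 2 μ).toReal ^ 2
        = ∫ x, α * ‖g x‖ ^ 2 ∂μ := by
          rw [integral_const_mul, aux_integral_norm_sq hg]
      _ ≤ ∫ x in Ω, K x * ‖g x‖ ^ 2 := hmono
  -- Part 1
  have hCS1 : ∫ x in Ω, q x * uhat x ≤ Q * (eLpNorm uhat 2 μ).toReal :=
    (integral_congr_ae (Filter.Eventually.of_forall fun x => mul_comm (q x) (uhat x))).trans_le
      (aux_integral_inner_le hq huhatL2)
  have hineq1 : α * A ^ 2 ≤ cp * Q * A := by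
    calc α * A ^ 2 ≤ ∫ x in Ω, K x * ‖gradient uhat x‖ ^ 2 := hlow _ hghat
      _ = ∫ x in Ω, q x * uhat x := henergy1
      _ ≤ Q * (eLpNorm uhat 2 μ).toReal := hCS1
      _ ≤ Q * (cp * A) := mul_le_mul_of_nonneg_left hpoincare1 hQ0
      _ = cp * Q * A := by ring
  have part1 : A ≤ cp / α * Q := by
    rcases eq_or_lt_of_le hA0 with h | h
    · rw [← h]; positivity
    · have h2 : α * A ≤ cp * Q := by
        have := hineq1
        nlinarith
      rw [div_mul_eq_mul_div, le_div_iff₀ hα]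
      linarith [mul_comm α A]
  -- Part 2
  have hg1 : Integrable (fun x => ‖gradient utilde x‖) μ :=
    (hgtilde.integrable one_le_two).norm
  have hnorm_le : ∫ x in Ω, ‖gradient utilde x‖ ≤ S * B := by
    have hone : MemLp (fun _ : EuclideanSpace ℝ (Fin 2) => (1 : ℝ)) 2 μ := memLp_const 1
    have h := aux_integral_inner_le hone hgtilde.norm
    have heq : ∫ x, ⟪(1 : ℝ), ‖gradient utilde x‖⟫ ∂μ
        = ∫ x in Ω, ‖gradient utilde x‖ := by
      refine integral_congr_ae (Filter.Eventually.of_forall fun x => ?_)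
      show ‖gradient utilde x‖ * (1 : ℝ) = _
      ring
    have hconst : (eLpNorm (fun _ : EuclideanSpace ℝ (Fin 2) => (1 : ℝ)) 2 μ).toReal = S := by
      rw [eLpNorm_const (1 : ℝ) (by norm_num) hμne]
      simp only [enorm_one, one_mul]
      rw [hμdef, Measure.restrict_apply_univ, ← ENNReal.toReal_rpow]
      norm_num
      rfl
    rw [heq, hconst, eLpNorm_norm] at h
    exact h
  have hineq2 : α * B ^ 2 ≤ β * (S * B) := by
    have hbound : -∫ x in Ω, K x * ⟪(EuclideanSpace.single i 1 : EuclideanSpace ℝ (Fin 2)),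
        gradient utilde x⟫ ≤ β * (S * B) := by
      have h1 : -∫ x in Ω, K x * ⟪(EuclideanSpace.single i 1 : EuclideanSpace ℝ (Fin 2)),
          gradient utilde x⟫ ≤ ∫ x in Ω, ‖K x * ⟪(EuclideanSpace.single i 1 :
            EuclideanSpace ℝ (Fin 2)), gradient utilde x⟫‖ := by
        rw [neg_le]
        calc -∫ x in Ω, ‖K x * ⟪(EuclideanSpace.single i 1 : EuclideanSpace ℝ (Fin 2)),
              gradient utilde x⟫‖
            ≤ -|∫ x in Ω, K x * ⟪(EuclideanSpace.single i 1 : EuclideanSpace ℝ (Fin 2)),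
              gradient utilde x⟫| := by
              have := norm_integral_le_integral_norm (μ := μ)
                (f := fun x => K x * ⟪(EuclideanSpace.single i 1 :
                  EuclideanSpace ℝ (Fin 2)), gradient utilde x⟫)
              rw [Real.norm_eq_abs] at this
              linarith
          _ ≤ _ := neg_abs_le _
      have h2 : ∫ x in Ω, ‖K x * ⟪(EuclideanSpace.single i 1 : EuclideanSpace ℝ (Fin 2)),
          gradient utilde x⟫‖ ≤ ∫ x in Ω, β * ‖gradient utilde x‖ := by
        refine integral_mono_of_nonneg (Filter.Eventually.of_forall fun x => norm_nonneg _)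
          (hg1.const_mul β) ?_
        filter_upwards [ae_restrict_mem hΩmeas] with x hx
        have hK2 := (hKbound x hx).2
        have hK1 := (hKbound x hx).1
        calc ‖K x * ⟪(EuclideanSpace.single i 1 : EuclideanSpace ℝ (Fin 2)),
              gradient utilde x⟫‖
            = ‖K x‖ * ‖⟪(EuclideanSpace.single i 1 : EuclideanSpace ℝ (Fin 2)),
              gradient utilde x⟫‖ := norm_mul _ _
          _ ≤ β * ‖gradient utilde x‖ := by
              refine mul_le_mul ?_ ?_ (norm_nonneg _) (le_of_lt hβ)
              · rw [Real.norm_eq_abs, abs_of_pos (lt_of_lt_of_le hα hK1)]; exact hK2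
              · calc ‖⟪(EuclideanSpace.single i 1 : EuclideanSpace ℝ (Fin 2)),
                    gradient utilde x⟫‖
                    ≤ ‖(EuclideanSpace.single i 1 : EuclideanSpace ℝ (Fin 2))‖ *
                      ‖gradient utilde x‖ := norm_inner_le_norm _ _
                  _ = ‖gradient utilde x‖ := by
                      rw [EuclideanSpace.norm_single]; simp
      have h3 : ∫ x in Ω, β * ‖gradient utilde x‖ ≤ β * (S * B) := by
        rw [integral_const_mul]
        exact mul_le_mul_of_nonneg_left hnorm_le (le_of_lt hβ)
      linarith
    calc α * B ^ 2 ≤ ∫ x in Ω, K x * ‖gradient utilde x‖ ^ 2 := hlow _ hgtilde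
      _ = -∫ x in Ω, K x * ⟪(EuclideanSpace.single i 1 : EuclideanSpace ℝ (Fin 2)),
          gradient utilde x⟫ := henergy2
      _ ≤ β * (S * B) := hbound
  have part2 : B ≤ S * β / α := by
    rcases eq_or_lt_of_le hB0 with h | h
    · rw [← h]; positivity
    · have h2 : α * B ≤ S * β := by nlinarith
      rw [le_div_iff₀ hα]
      linarith [mul_comm α B]
  -- Parts 3 and 4
  have hgradsum : gradient (fun x => uhat x + utilde x)
      = fun x => gradient uhat x + gradient utilde x := by
    funext x
    unfold gradient
    rw [fderiv_fun_add (huhat x) (hutilde x), map_add]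
  have hsum_grad : (eLpNorm (gradient (fun x => uhat x + utilde x)) 2 μ).toReal ≤ A + B := by
    rw [hgradsum]
    have h := eLpNorm_add_le hghat.aestronglyMeasurable hgtilde.aestronglyMeasurable
      (one_le_two : (1:ENNReal) ≤ 2)
    have hle : eLpNorm (fun x => gradient uhat x + gradient utilde x) 2 μ
        ≤ eLpNorm (gradient uhat) 2 μ + eLpNorm (gradient utilde) 2 μ := h
    have hfin2 : eLpNorm (gradient uhat) 2 μ + eLpNorm (gradient utilde) 2 μ ≠ ⊤ :=
      ENNReal.add_ne_top.mpr ⟨hghat.2.ne, hgtilde.2.ne⟩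
    calc (eLpNorm (fun x => gradient uhat x + gradient utilde x) 2 μ).toReal
        ≤ (eLpNorm (gradient uhat) 2 μ + eLpNorm (gradient utilde) 2 μ).toReal :=
          ENNReal.toReal_mono hfin2 hle
      _ = A + B := ENNReal.toReal_add hghat.2.ne hgtilde.2.ne
  have hsum_fun : (eLpNorm (fun x => uhat x + utilde x) 2 μ).toReal
      ≤ (eLpNorm uhat 2 μ).toReal + (eLpNorm utilde 2 μ).toReal := by
    have h : eLpNorm (fun x => uhat x + utilde x) 2 μ
        ≤ eLpNorm uhat 2 μ + eLpNorm utilde 2 μ :=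
      eLpNorm_add_le huhatL2.aestronglyMeasurable hutildeL2.aestronglyMeasurable
        (one_le_two : (1:ENNReal) ≤ 2)
    have hfin2 : eLpNorm uhat 2 μ + eLpNorm utilde 2 μ ≠ ⊤ :=
      ENNReal.add_ne_top.mpr ⟨huhatL2.2.ne, hutildeL2.2.ne⟩
    calc (eLpNorm (fun x => uhat x + utilde x) 2 μ).toReal
        ≤ (eLpNorm uhat 2 μ + eLpNorm utilde 2 μ).toReal := ENNReal.toReal_mono hfin2 h
      _ = _ := ENNReal.toReal_add huhatL2.2.ne hutildeL2.2.ne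
  refine ⟨part1, part2, ?_, ?_⟩
  · calc (eLpNorm (fun x => uhat x + utilde x) 2 μ).toReal
        ≤ (eLpNorm uhat 2 μ).toReal + (eLpNorm utilde 2 μ).toReal := hsum_fun
      _ ≤ cp * A + cp * B := add_le_add hpoincare1 hpoincare2
      _ ≤ cp * (cp / α * Q) + cp * (S * β / α) := by
          exact add_le_add (mul_le_mul_of_nonneg_left part1 (le_of_lt hcp))
            (mul_le_mul_of_nonneg_left part2 (le_of_lt hcp))
      _ = cp ^ 2 / α * Q + cp * S * β / α := by ring
  · calc (eLpNorm (gradient (fun x => uhat x + utilde x)) 2 μ).toReal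
        ≤ A + B := hsum_grad
      _ ≤ cp / α * Q + S * β / α := add_le_add part1 part2
end
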